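/- arXiv:1610.04275 — 6 statements merged into one kernel-verified Lean document; each statement's English description precedes it below -/
import Mathlib

section
/- Let A be a graded skew PBW extension of the ℕ-graded K-algebra R, with generators x₁,…,xₙ, and let (Aₚ)_{p∈ℕ} be the subspaces defined in the context. Then (i) Rₚ ⊆ Aₚ for every p ∈ ℕ, and (ii) A is the internal direct sum of the subspaces Aₚ: every element of A lies in the sum of the Aₚ's, and the family (Aₚ)_{p∈ℕ} is independent (each Aₚ intersects the sum of the other A_q's trivially). -/
noncomputable section

open scoped BigOperators

/-- The monomial `x₁^{α₁} ⋯ xₙ^{αₙ}` with factors in increasing index order. -/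
def pbwMonomial {A : Type*} [Ring A] {n : ℕ} (x : Fin n → A) (α : Fin n → ℕ) : A :=
  (List.ofFn fun i => x i ^ α i).prod

/-- `A` is a skew PBW extension of the `K`-subalgebra `R` with generators `x i`. -/
structure IsSkewPBWExtension (K : Type*) {A : Type*} [Field K] [Ring A] [Algebra K A]
    (R : Subalgebra K A) {n : ℕ} (x : Fin n → A) : Prop where
  isBasis : ∃ b : Module.Basis (Fin n → ℕ) R A, ∀ α, (b α : A) = pbwMonomial x α
  coeff_comm : ∀ i : Fin n, ∀ r ∈ R, r ≠ 0 →
    ∃ c ∈ R, c ≠ 0 ∧ x i * r - c * x i ∈ R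
  gens_comm : ∀ i j : Fin n, ∃ c ∈ R, c ≠ 0 ∧
    ∃ r0 ∈ R, ∃ rr : Fin n → A, (∀ k, rr k ∈ R) ∧
      x j * x i - c * (x i * x j) = r0 + ∑ k, rr k * x k

/-- `A` is a graded skew PBW extension of the ℕ-graded algebra `R`,
whose grading is given by the family `RG` of `K`-subspaces of `A`. -/
structure IsGradedSkewPBWExtension (K : Type*) {A : Type*} [Field K] [Ring A] [Algebra K A]
    (R : Subalgebra K A) (RG : ℕ → Submodule K A) {n : ℕ} (x : Fin n → A)
    extends IsSkewPBWExtension K R x : Prop where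
  grading_le : ∀ p, RG p ≤ Subalgebra.toSubmodule R
  grading_sup : (⨆ p, RG p) = Subalgebra.toSubmodule R
  grading_indep : iSupIndep RG
  grading_one : (1 : A) ∈ RG 0
  grading_mul : ∀ p q : ℕ, ∀ a ∈ RG p, ∀ b ∈ RG q, a * b ∈ RG (p + q)
  sigma_delta : ∀ i : Fin n, ∃ σ : R →+* R, Function.Bijective σ ∧
    (∀ p : ℕ, ∀ r : R, (r : A) ∈ RG p → ((σ r : A) ∈ RG p)) ∧
    ∃ δ : R → R,
      (∀ r s : R, δ (r + s) = δ r + δ s) ∧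
      (∀ r s : R, δ (r * s) = σ r * δ s + δ r * s) ∧
      (∀ p : ℕ, ∀ r : R, (r : A) ∈ RG p → ((δ r : A) ∈ RG (p + 1))) ∧
      (∀ r : R, x i * (r : A) = (σ r : A) * x i + (δ r : A))
  gens_comm_graded : ∀ i j : Fin n, ∃ c : R, IsUnit c ∧ (c : A) ∈ RG 0 ∧
    ∃ r0 ∈ RG 2, ∃ rr : Fin n → A, (∀ k, rr k ∈ RG 1) ∧
      x j * x i - (c : A) * (x i * x j) = r0 + ∑ k, rr k * x k

section Aux

variable {K A : Type*} [Field K] [Ring A] [Algebra K A]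
  (R : Subalgebra K A) {n : ℕ} (x : Fin n → A)
  (b : Module.Basis (Fin n → ℕ) R A)

lemma pbwMonomial_zero : pbwMonomial x 0 = 1 := by simp [pbwMonomial]

def coordMap (β : Fin n → ℕ) : A →ₗ[K] A :=
  (R.val.toLinearMap).comp
    (((Finsupp.lapply β : ((Fin n → ℕ) →₀ R) →ₗ[R] R).restrictScalars K).comp
      (b.repr.toLinearMap.restrictScalars K))

lemma coordMap_apply (β : Fin n → ℕ) (a : A) : coordMap R b β a = (b.repr a β : A) := rfl

lemma subalg_smul_def (r : R) (a : A) : r • a = (r : A) * a := rfl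

lemma coordMap_smul_basis (r : R) (α β : Fin n → ℕ) :
    coordMap R b β (r • b α) = if β = α then (r : A) else 0 := by
  rw [coordMap_apply, map_smul, Module.Basis.repr_self]
  by_cases hβ : β = α
  · simp [hβ, Finsupp.single_apply]
  · simp [hβ, Finsupp.single_apply, Ne.symm hβ]

lemma eq_zero_of_coordMap (a : A) (hc : ∀ β, coordMap R b β a = 0) : a = 0 := by
  have h0 : b.repr a = 0 := by
    ext β
    have := hc β
    rw [coordMap_apply] at this
    exact_mod_cast this
  simpa using congrArg b.repr.symm h0

end Aux

/-- The `p`-th graded component of a graded skew PBW extension: the `K`-span of the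
elements `r · x^α` with `r ∈ R_t` and `t + |α| = p`. -/
def gradedPart (K : Type*) {A : Type*} [Field K] [Ring A] [Algebra K A]
    (RG : ℕ → Submodule K A) {n : ℕ} (x : Fin n → A) (p : ℕ) : Submodule K A :=
  Submodule.span K
    {a : A | ∃ (t : ℕ) (α : Fin n → ℕ), ∃ r ∈ RG t, t + (∑ i, α i) = p ∧ a = r * pbwMonomial x α}


/-- If `A` is a graded skew PBW extension of the ℕ-graded `K`-algebra `R`,
then (i) `R_p ⊆ A_p` for all `p`, and (ii) `A` is the internal direct sum of the
subspaces `A_p`: they span `A` and form an independent family. -/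
theorem gradedSkewPBW_isInternalDirectSum
    {K A : Type*} [Field K] [Ring A] [Algebra K A]
    (R : Subalgebra K A) (RG : ℕ → Submodule K A) {n : ℕ} (x : Fin n → A)
    (h : IsGradedSkewPBWExtension K R RG x) :
    (∀ p : ℕ, RG p ≤ gradedPart K RG x p) ∧
    (⨆ p : ℕ, gradedPart K RG x p) = ⊤ ∧
    iSupIndep (fun p : ℕ => gradedPart K RG x p) := by
  obtain ⟨b, hb⟩ := h.isBasis
  have key : ∀ (r : A) (hr : r ∈ R) (α : Fin n → ℕ),
      r * pbwMonomial x α = (⟨r, hr⟩ : R) • b α := by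
    intro r hr α
    rw [subalg_smul_def, hb]
  refine ⟨?_, ?_, ?_⟩
  · intro p r hr
    exact Submodule.subset_span ⟨p, 0, r, hr, by simp, by rw [pbwMonomial_zero, mul_one]⟩
  · rw [eq_top_iff]
    intro a _
    have hrep := b.linearCombination_repr a
    rw [Finsupp.linearCombination_apply, Finsupp.sum] at hrep
    rw [← hrep]
    apply Submodule.sum_mem
    intro α _
    set s := b.repr a α with hs
    have hsR : (s : A) ∈ (⨆ p, RG p) := by rw [h.grading_sup]; exact s.2
    have hN : (⨆ t, RG t) ≤ Submodule.comap (LinearMap.mulRight K (pbwMonomial x α))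
        (⨆ p, gradedPart K RG x p) := by
      refine iSup_le fun t r hr => ?_
      exact Submodule.mem_iSup_of_mem (t + ∑ i, α i)
        (Submodule.subset_span ⟨t, α, r, hr, rfl, rfl⟩)
    have := hN hsR
    rw [Submodule.mem_comap, LinearMap.mulRight_apply] at this
    rwa [subalg_smul_def, hb]
  · set σf : ℕ → (Fin n → ℕ) → Submodule K A :=
      fun p α => if (∑ i, α i) ≤ p then RG (p - ∑ i, α i) else ⊥ with hσf
    set C : ℕ → Submodule K A :=
      fun p => ⨅ β, Submodule.comap (coordMap R b β) (σf p β) with hC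
    have hle : ∀ p, gradedPart K RG x p ≤ C p := by
      intro p
      rw [gradedPart, Submodule.span_le]
      rintro a ⟨t, α, r, hr, hsum, rfl⟩
      have hrR : r ∈ R := h.grading_le t hr
      rw [SetLike.mem_coe, hC, Submodule.mem_iInf]
      intro β
      rw [Submodule.mem_comap, key r hrR α, coordMap_smul_basis]
      by_cases hβ : β = α
      · rw [if_pos hβ, hσf]
        simp only [hβ]
        rw [if_pos (by omega)]
        have : p - ∑ i, α i = t := by omega
        rw [this]
        exact hr
      · rw [if_neg hβ]
        exact zero_mem _
    have hCindep : iSupIndep C := by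
      intro p
      rw [disjoint_iff_inf_le]
      intro a ha
      rw [Submodule.mem_inf] at ha
      obtain ⟨haC, haS⟩ := ha
      rw [Submodule.mem_bot]
      apply eq_zero_of_coordMap R b
      intro β
      have h1 : coordMap R b β a ∈ σf p β := by
        rw [hC, Submodule.mem_iInf] at haC
        exact haC β
      have h2 : coordMap R b β a ∈ ⨆ q, ⨆ _ : q ≠ p, σf q β := by
        have hcomap : (⨆ q, ⨆ _ : q ≠ p, C q) ≤
            Submodule.comap (coordMap R b β) (⨆ q, ⨆ _ : q ≠ p, σf q β) := by
          refine iSup₂_le fun q hq => ?_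
          refine le_trans (iInf_le _ β) (Submodule.comap_mono ?_)
          exact le_iSup₂ (f := fun q (_ : q ≠ p) => σf q β) q hq
        exact hcomap haS
      by_cases hβ : (∑ i, β i) ≤ p
      · have h4 : coordMap R b β a ∈ RG (p - ∑ i, β i) := by
          simp only [hσf] at h1
          rwa [if_pos hβ] at h1
        have h3 : (⨆ q, ⨆ _ : q ≠ p, σf q β) ≤ ⨆ s, ⨆ _ : s ≠ p - ∑ i, β i, RG s := by
          refine iSup₂_le fun q hq => ?_
          by_cases hq' : (∑ i, β i) ≤ q
          · simp only [hσf]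
            rw [if_pos hq']
            exact le_iSup₂ (f := fun s (_ : s ≠ p - ∑ i, β i) => RG s) (q - ∑ i, β i)
              (by omega)
          · simp only [hσf]
            rw [if_neg hq']
            exact bot_le
        have hd := disjoint_iff_inf_le.mp (h.grading_indep (p - ∑ i, β i))
        have : coordMap R b β a ∈ (⊥ : Submodule K A) :=
          hd ⟨h4, h3 h2⟩
        rwa [Submodule.mem_bot] at this
      · simp only [hσf] at h1
        rw [if_neg hβ, Submodule.mem_bot] at h1
        exact h1
    exact hCindep.mono hle
end
end

section
/- Let A be a graded skew PBW extension of the ℕ-graded K-algebra R, with generators x₁,…,xₙ, and let (Aₚ)_{p∈ℕ} be the subspaces defined in the context. Then 1 ∈ A₀ and Aₚ·A_q ⊆ A_{p+q} for all p, q ∈ ℕ; hence, together with the direct sum decomposition A = ⊕_{p≥0} Aₚ, the family (Aₚ) makes A an ℕ-graded K-algebra, and moreover A is a graded left R-module for this grading, i.e. Rₜ·Aₚ ⊆ A_{t+p} for all t, p ∈ ℕ. -/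
noncomputable section

open scoped BigOperators

section AuxPBW

variable {K A : Type*} [Field K] [Ring A] [Algebra K A]
variable (R : Subalgebra K A) (RG : ℕ → Submodule K A) {n : ℕ} (x : Fin n → A)

lemma pbw_zero : pbwMonomial x (fun _ => 0) = 1 := by
  simp [pbwMonomial]

lemma mem_gradedPart_of (t : ℕ) (α : Fin n → ℕ) {r : A} (hr : r ∈ RG t) :
    r * pbwMonomial x α ∈ gradedPart K RG x (t + ∑ i, α i) :=
  Submodule.subset_span ⟨t, α, r, hr, rfl, rfl⟩

lemma rmul_gradedPart (h : IsGradedSkewPBWExtension K R RG x)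
    {t p : ℕ} {r : A} (hr : r ∈ RG t) {a : A} (ha : a ∈ gradedPart K RG x p) :
    r * a ∈ gradedPart K RG x (t + p) := by
  revert a
  suffices hle : gradedPart K RG x p ≤
      (gradedPart K RG x (t + p)).comap (LinearMap.mulLeft K r) from
    fun a ha => hle ha
  apply Submodule.span_le.mpr
  rintro a ⟨u, α, s, hs, hup, rfl⟩
  simp only [Submodule.mem_comap, LinearMap.mulLeft_apply, SetLike.mem_coe]
  have hmem := mem_gradedPart_of RG x (t + u) α (h.grading_mul t u r hr s hs)
  rw [← mul_assoc]
  subst hup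
  rwa [add_assoc] at hmem

lemma pbw_peel {B : Type*} [Ring B] : ∀ {m : ℕ} (y : Fin m → B) (γ : Fin m → ℕ) (j : Fin m),
    (∀ k, k < j → γ k = 0) →
    y j * pbwMonomial y γ = pbwMonomial y (Function.update γ j (γ j + 1)) := by
  intro m
  induction m with
  | zero => exact fun y γ j _ => j.elim0
  | succ m ih =>
    intro y γ j hz
    unfold pbwMonomial
    simp only [List.ofFn_succ, List.prod_cons]
    rcases Fin.eq_zero_or_eq_succ j with hj | ⟨j', rfl⟩
    · subst hj
      rw [← mul_assoc, ← pow_succ', Function.update_self]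
      refine congrArg _ (congrArg List.prod (congrArg List.ofFn (funext fun k => ?_)))
      rw [Function.update_of_ne (Fin.succ_ne_zero k)]
    · have hγ0 : γ 0 = 0 := hz 0 (Fin.succ_pos j')
      have hrec := ih (fun k => y k.succ) (fun k => γ k.succ) j'
        (fun k hk => hz k.succ (Fin.succ_lt_succ_iff.mpr hk))
      unfold pbwMonomial at hrec
      have hupd : ∀ k : Fin m, Function.update γ j'.succ (γ j'.succ + 1) k.succ
          = Function.update (fun k => γ k.succ) j' (γ j'.succ + 1) k := by
        intro k
        by_cases hkj : k = j'
        · subst hkj; rw [Function.update_self, Function.update_self]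
        · rw [Function.update_of_ne (fun hc => hkj (Fin.succ_injective _ hc)),
            Function.update_of_ne hkj]
      calc y j'.succ * (y 0 ^ γ 0 * (List.ofFn fun i => y i.succ ^ γ i.succ).prod)
          = y j'.succ * (List.ofFn fun i => y i.succ ^ γ i.succ).prod := by
            rw [hγ0, pow_zero, one_mul]
        _ = (List.ofFn fun k => y k.succ ^
              Function.update (fun k => γ k.succ) j' (γ j'.succ + 1) k).prod := hrec
        _ = y 0 ^ Function.update γ j'.succ (γ j'.succ + 1) 0 *
            (List.ofFn fun i => y i.succ ^
              Function.update γ j'.succ (γ j'.succ + 1) i.succ).prod := by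
            rw [Function.update_of_ne (Ne.symm (Fin.succ_ne_zero j')), hγ0, pow_zero, one_mul]
            exact congrArg List.prod (congrArg List.ofFn (funext fun k => by rw [hupd k]))

lemma sum_update_succ (β : Fin n → ℕ) (j : Fin n) :
    ∑ k, Function.update β j (β j + 1) k = (∑ k, β k) + 1 := by
  classical
  have h1 := Finset.sum_update_of_mem (Finset.mem_univ j) β (β j + 1)
  have h2 := Finset.add_sum_erase Finset.univ β (Finset.mem_univ j)
  rw [Finset.sdiff_singleton_eq_erase] at h1
  omega

lemma keyE_base (h : IsGradedSkewPBWExtension K R RG x) (i : Fin n) (β : Fin n → ℕ)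
    (hb : ∀ k, k < i → β k = 0) :
    x i * pbwMonomial x β ∈ gradedPart K RG x ((∑ k, β k) + 1) := by
  rw [pbw_peel x β i hb]
  have hmem := mem_gradedPart_of RG x 0 (Function.update β i (β i + 1)) h.grading_one
  rw [one_mul, zero_add, sum_update_succ] at hmem
  exact hmem

lemma xmul_aux (h : IsGradedSkewPBWExtension K R RG x) (N : ℕ)
    (IH : ∀ (i : Fin n) (β : Fin n → ℕ), (n+1) * (∑ k, β k) + i ≤ N →
      x i * pbwMonomial x β ∈ gradedPart K RG x ((∑ k, β k) + 1))
    (j : Fin n) (m : ℕ) (hm : (n+1) * m + j ≤ N) :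
    ∀ a ∈ gradedPart K RG x m, x j * a ∈ gradedPart K RG x (m + 1) := by
  suffices hle : gradedPart K RG x m ≤
      (gradedPart K RG x (m+1)).comap (LinearMap.mulLeft K (x j)) from
    fun a ha => hle ha
  apply Submodule.span_le.mpr
  rintro a ⟨t, γ, s, hs, htm, rfl⟩
  simp only [Submodule.mem_comap, LinearMap.mulLeft_apply, SetLike.mem_coe]
  have hsR : s ∈ R := h.grading_le t hs
  obtain ⟨σ, hσbij, hσmem, δ, hδadd, hδmul, hδmem, hrel⟩ := h.sigma_delta j
  set sR : R := ⟨s, hsR⟩ with hsRdef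
  have e : x j * s = (σ sR : A) * x j + (δ sR : A) := hrel sR
  have key : x j * (s * pbwMonomial x γ) =
      (σ sR : A) * (x j * pbwMonomial x γ) + (δ sR : A) * pbwMonomial x γ := by
    rw [← mul_assoc, e, add_mul, mul_assoc]
  rw [key]
  apply Submodule.add_mem
  · have hγle : ∑ k, γ k ≤ m := by omega
    have h1 := IH j γ (le_trans (Nat.add_le_add_right
      (Nat.mul_le_mul_left _ hγle) _) hm)
    have h2 := rmul_gradedPart R RG x h (hσmem t sR hs) h1
    have hdeg : t + ((∑ k, γ k) + 1) = m + 1 := by omega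
    rwa [hdeg] at h2
  · have hmem := mem_gradedPart_of RG x (t+1) γ (hδmem t sR hs)
    have hdeg : (t+1) + ∑ k, γ k = m + 1 := by omega
    rwa [hdeg] at hmem

lemma keyE (h : IsGradedSkewPBWExtension K R RG x) :
    ∀ (N : ℕ) (i : Fin n) (β : Fin n → ℕ), (n+1) * (∑ k, β k) + i ≤ N →
      x i * pbwMonomial x β ∈ gradedPart K RG x ((∑ k, β k) + 1) := by
  intro N
  induction N with
  | zero =>
    intro i β hN
    apply keyE_base R RG x h
    intro k hk
    have hi : (i : ℕ) = 0 := by omega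
    exact absurd (Fin.lt_def.mp hk) (by omega)
  | succ N IH =>
    intro i β hN
    classical
    by_cases hb : ∀ k, k < i → β k = 0
    · exact keyE_base R RG x h i β hb
    · push_neg at hb
      obtain ⟨k0, hk0lt, hk0ne⟩ := hb
      have hex : ∃ m : ℕ, ∃ hm : m < n, β ⟨m, hm⟩ ≠ 0 := ⟨k0, k0.isLt, by
        rwa [Fin.eta]⟩
      obtain ⟨hjn, hjne⟩ := Nat.find_spec hex
      set j : Fin n := ⟨Nat.find hex, hjn⟩ with hjdef
      have hjmin : ∀ k : Fin n, k < j → β k = 0 := by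
        intro k hk
        have := Nat.find_min hex (Fin.lt_def.mp hk)
        push_neg at this
        have := this k.isLt
        rwa [Fin.eta] at this
      have hji : j < i := by
        have h1 : Nat.find hex ≤ (k0 : ℕ) := Nat.find_min' hex ⟨k0.isLt, by rwa [Fin.eta]⟩
        exact Fin.lt_def.mpr (lt_of_le_of_lt h1 (Fin.lt_def.mp hk0lt))
      have hβj : 1 ≤ β j := Nat.one_le_iff_ne_zero.mpr hjne
      set β' : Fin n → ℕ := Function.update β j (β j - 1) with hβ'def
      have hβ'z : ∀ k, k < j → β' k = 0 := by
        intro k hk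
        rw [hβ'def, Function.update_of_ne (Fin.ne_of_lt hk)]
        exact hjmin k hk
      have hupdβ : Function.update β' j (β' j + 1) = β := by
        funext k
        by_cases hkj : k = j
        · subst hkj
          rw [Function.update_self, hβ'def, Function.update_self]
          omega
        · rw [Function.update_of_ne hkj, hβ'def, Function.update_of_ne hkj]
      have hpeel : x j * pbwMonomial x β' = pbwMonomial x β := by
        rw [pbw_peel x β' j hβ'z, hupdβ]
      have hS : (∑ k, β' k) + 1 = ∑ k, β k := by
        conv_rhs => rw [← hupdβ]
        rw [sum_update_succ]
      obtain ⟨c, hcU, hc0, r0, hr0, rr, hrr, hrel⟩ := h.gens_comm_graded j i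
      have hrel' : x i * x j = (r0 + ∑ k, rr k * x k) + (c : A) * (x j * x i) :=
        sub_eq_iff_eq_add.mp hrel
      have heq : x i * pbwMonomial x β =
          (r0 * pbwMonomial x β' + ∑ k, rr k * (x k * pbwMonomial x β')) +
            (c : A) * (x j * (x i * pbwMonomial x β')) := by
        calc x i * pbwMonomial x β = x i * (x j * pbwMonomial x β') := by rw [hpeel]
          _ = (x i * x j) * pbwMonomial x β' := by rw [mul_assoc]
          _ = ((r0 + ∑ k, rr k * x k) + (c : A) * (x j * x i)) * pbwMonomial x β' := by
              rw [hrel']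
          _ = _ := by
              rw [add_mul, add_mul, Finset.sum_mul]
              simp only [mul_assoc]
      -- bounds
      have hP : (n+1) * (∑ k, β' k) + (n+1) = (n+1) * (∑ k, β k) := by
        rw [← hS]; ring
      rw [heq]
      have hSβ' := (∑ k, β' k)
      apply Submodule.add_mem
      · apply Submodule.add_mem
        · have hmem := mem_gradedPart_of RG x 2 β' hr0
          have hdeg : 2 + ∑ k, β' k = (∑ k, β k) + 1 := by omega
          rwa [hdeg] at hmem
        · apply Submodule.sum_mem
          intro k _
          have hk1 := IH k β' (by
            have hkn : (k : ℕ) < n := k.isLt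
            have hnn : (i : ℕ) < n := i.isLt
            generalize hA : (n+1) * (∑ k, β' k) = P at hP ⊢
            generalize hB : (n+1) * (∑ k, β k) = Q at hP hN ⊢
            omega)
          have hk2 := rmul_gradedPart R RG x h (hrr k) hk1
          have hdeg : 1 + ((∑ k, β' k) + 1) = (∑ k, β k) + 1 := by omega
          rwa [hdeg] at hk2
      · have hi1 := IH i β' (by
          generalize hA : (n+1) * (∑ k, β' k) = P at hP ⊢
          generalize hB : (n+1) * (∑ k, β k) = Q at hP hN ⊢
          omega)
        rw [hS] at hi1
        have hj1 := xmul_aux R RG x h N IH j (∑ k, β k) (by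
          have hij : (j : ℕ) < (i : ℕ) := Fin.lt_def.mp hji
          generalize hB : (n+1) * (∑ k, β k) = Q at hN ⊢
          omega) _ hi1
        have h2 := rmul_gradedPart R RG x h hc0 hj1
        rwa [zero_add] at h2

lemma xmul (h : IsGradedSkewPBWExtension K R RG x) (i : Fin n) (q : ℕ) {a : A}
    (ha : a ∈ gradedPart K RG x q) : x i * a ∈ gradedPart K RG x (q + 1) :=
  xmul_aux R RG x h ((n+1)*q + n) (fun i' β' hb => keyE R RG x h _ i' β' hb) i q
    (Nat.add_le_add_left i.isLt.le _) a ha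

lemma powmul (h : IsGradedSkewPBWExtension K R RG x) (i : Fin n) (k : ℕ) :
    ∀ q : ℕ, ∀ b ∈ gradedPart K RG x q, x i ^ k * b ∈ gradedPart K RG x (k + q) := by
  induction k with
  | zero => intro q b hb; simpa using hb
  | succ k ih =>
    intro q b hb
    have h1 := xmul R RG x h i q hb
    have h2 := ih (q+1) _ h1
    rw [pow_succ, mul_assoc]
    have hdeg : k + (q + 1) = (k + 1) + q := by omega
    rwa [hdeg] at h2

lemma listmul : ∀ (m : ℕ) (f : Fin m → A) (d : Fin m → ℕ),
    (∀ i : Fin m, ∀ q : ℕ, ∀ b ∈ gradedPart K RG x q, f i * b ∈ gradedPart K RG x (d i + q)) →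
    ∀ q : ℕ, ∀ b ∈ gradedPart K RG x q,
      (List.ofFn f).prod * b ∈ gradedPart K RG x ((∑ i, d i) + q) := by
  intro m
  induction m with
  | zero => intro f d _ q b hb; simpa using hb
  | succ m ih =>
    intro f d hf q b hb
    rw [List.ofFn_succ, List.prod_cons, mul_assoc]
    have h1 := ih (fun i => f i.succ) (fun i => d i.succ) (fun i => hf i.succ) q b hb
    have h2 := hf 0 _ _ h1
    rw [Fin.sum_univ_succ, add_assoc]
    exact h2

lemma monmul (h : IsGradedSkewPBWExtension K R RG x) (α : Fin n → ℕ) (q : ℕ)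
    {b : A} (hb : b ∈ gradedPart K RG x q) :
    pbwMonomial x α * b ∈ gradedPart K RG x ((∑ i, α i) + q) :=
  listmul RG x n (fun i => x i ^ α i) α (fun i => powmul R RG x h i (α i)) q b hb

end AuxPBW
/-- If `A` is a graded skew PBW extension of the ℕ-graded `K`-algebra `R`,
then `1 ∈ A₀`, `A_p · A_q ⊆ A_{p+q}`, so (together with the direct sum decomposition)
the family `(A_p)` makes `A` an ℕ-graded `K`-algebra; moreover `A` is a graded left
`R`-module for this grading: `R_t · A_p ⊆ A_{t+p}`. -/
theorem gradedSkewPBW_isGradedAlgebra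
    {K A : Type*} [Field K] [Ring A] [Algebra K A]
    (R : Subalgebra K A) (RG : ℕ → Submodule K A) {n : ℕ} (x : Fin n → A)
    (h : IsGradedSkewPBWExtension K R RG x) :
    (1 : A) ∈ gradedPart K RG x 0 ∧
    (∀ p q : ℕ, ∀ a ∈ gradedPart K RG x p, ∀ b ∈ gradedPart K RG x q,
      a * b ∈ gradedPart K RG x (p + q)) ∧
    (∀ t p : ℕ, ∀ r ∈ RG t, ∀ a ∈ gradedPart K RG x p,
      r * a ∈ gradedPart K RG x (t + p)) := by
  refine ⟨?_, ?_, ?_⟩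
  · exact Submodule.subset_span ⟨0, fun _ => 0, 1, h.grading_one, by simp,
      by rw [pbw_zero x, mul_one]⟩
  · intro p q a ha b hb
    revert a
    suffices hle : gradedPart K RG x p ≤
        (gradedPart K RG x (p + q)).comap (LinearMap.mulRight K b) from
      fun a ha => hle ha
    apply Submodule.span_le.mpr
    rintro a ⟨t, α, r, hr, htp, rfl⟩
    simp only [Submodule.mem_comap, LinearMap.mulRight_apply, SetLike.mem_coe]
    rw [mul_assoc]
    have h1 := monmul R RG x h α q hb
    have h2 := rmul_gradedPart R RG x h hr h1
    have hdeg : t + ((∑ i, α i) + q) = p + q := by omega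
    rwa [hdeg] at h2
  · intro t p r hr a ha
    exact rmul_gradedPart R RG x h hr ha
end
end

section
/- Let A be a skew PBW extension of R with generators x₁,…,xₙ. Then for each 1 ≤ i ≤ n there exist an injective ring endomorphism σᵢ : R → R and a σᵢ-derivation δᵢ : R → R (an additive map satisfying δᵢ(rs) = σᵢ(r)δᵢ(s) + δᵢ(r)s for all r, s ∈ R) such that xᵢr = σᵢ(r)xᵢ + δᵢ(r) for every r ∈ R. -/
noncomputable section

open scoped BigOperators

lemma pbw_prod_single {A : Type*} [Monoid A] : ∀ {n : ℕ} (x : Fin n → A) (i : Fin n),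
    (List.ofFn fun k => if k = i then x k else 1).prod = x i := by
  intro n
  induction n with
  | zero => exact fun x i => i.elim0
  | succ m ih =>
    intro x i
    rw [List.ofFn_succ]
    rcases Fin.eq_zero_or_eq_succ i with h0 | ⟨j, hj⟩
    · subst h0
      simp only [if_pos rfl, List.prod_cons]
      have ht : (List.ofFn fun k : Fin m => if Fin.succ k = 0 then x k.succ else 1).prod = 1 := by
        rw [List.prod_eq_one]
        intro a ha
        simp only [List.mem_ofFn] at ha
        obtain ⟨k, rfl⟩ := ha
        simp [Fin.succ_ne_zero]
      simp [ht]
    · subst hj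
      have h0 : (0 : Fin (m+1)) ≠ j.succ := (Fin.succ_ne_zero j).symm
      simp only [List.prod_cons, if_neg h0, one_mul]
      have := ih (fun k => x k.succ) j
      simp only [Fin.succ_inj]
      exact this

lemma pbwMonomial_zero_s5 {A : Type*} [Ring A] {n : ℕ} (x : Fin n → A) :
    pbwMonomial x 0 = 1 := by
  simp [pbwMonomial]

lemma pbwMonomial_single {A : Type*} [Ring A] {n : ℕ} (x : Fin n → A) (i : Fin n) :
    pbwMonomial x (Pi.single i 1) = x i := by
  have hf : (fun k => x k ^ Pi.single i 1 k) = fun k => if k = i then x k else 1 := by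
    funext k
    by_cases hk : k = i <;> simp [Pi.single_apply, hk]
  rw [pbwMonomial, hf, pbw_prod_single x i]

/-- `A` is a skew PBW extension of the subring `R` with generators `x i`:
the monomials `x^α` form a basis of `A` as a left `R`-module, and conditions (ii), (iii)
of the definition hold. -/
structure IsSkewPBWExtensionOfSubring {A : Type*} [Ring A] (R : Subring A)
    {n : ℕ} (x : Fin n → A) : Prop where
  isBasis : ∃ b : Module.Basis (Fin n → ℕ) R A, ∀ α, (b α : A) = pbwMonomial x α
  coeff_comm : ∀ i : Fin n, ∀ r ∈ R, r ≠ 0 →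
    ∃ c ∈ R, c ≠ 0 ∧ x i * r - c * x i ∈ R
  gens_comm : ∀ i j : Fin n, ∃ c ∈ R, c ≠ 0 ∧
    ∃ r0 ∈ R, ∃ rr : Fin n → A, (∀ k, rr k ∈ R) ∧
      x j * x i - c * (x i * x j) = r0 + ∑ k, rr k * x k

/-- If `A` is a skew PBW extension of `R` with generators `x₁,…,xₙ`, then
for each `i` there exist an injective ring endomorphism `σᵢ : R → R` and a
`σᵢ`-derivation `δᵢ : R → R` such that `xᵢ r = σᵢ(r) xᵢ + δᵢ(r)` for every `r ∈ R`. -/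
theorem skewPBW_exists_sigma_delta
    {A : Type*} [Ring A] (R : Subring A) {n : ℕ} (x : Fin n → A)
    (h : IsSkewPBWExtensionOfSubring R x) :
    ∀ i : Fin n, ∃ σ : R →+* R, Function.Injective σ ∧
      ∃ δ : R → R,
        (∀ r s : R, δ (r + s) = δ r + δ s) ∧
        (∀ r s : R, δ (r * s) = σ r * δ s + δ r * s) ∧
        (∀ r : R, x i * (r : A) = (σ r : A) * x i + (δ r : A)) := by
  obtain ⟨b, hb⟩ := h.isBasis
  intro i
  set ei : Fin n → ℕ := Pi.single i 1 with hei
  have hei0 : ei ≠ 0 := by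
    intro hc
    have := congrFun hc i
    simp [hei, Pi.single_apply] at this
  have hrepr : ∀ c r0 : R,
      b.repr ((c : A) * x i + (r0 : A)) = Finsupp.single ei c + Finsupp.single 0 r0 := by
    intro c r0
    have key : (c : A) * x i + (r0 : A) = c • b ei + r0 • b 0 := by
      rw [hb, hb, pbwMonomial_zero_s5, pbwMonomial_single]
      show _ = (c : A) * x i + (r0 : A) * 1
      rw [mul_one]
    rw [key]
    simp [b.repr_self, Finsupp.smul_single]
  have huniq : ∀ c r0 c' r0' : R,
      (c : A) * x i + (r0 : A) = (c' : A) * x i + (r0' : A) → c = c' ∧ r0 = r0' := by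
    intro c r0 c' r0' hcc
    have := (hrepr c r0).symm.trans ((congrArg b.repr hcc).trans (hrepr c' r0'))
    constructor
    · have h1 := congrArg (fun f => f ei) this
      simpa [Finsupp.single_apply, hei0, Ne.symm hei0] using h1
    · have h1 := congrArg (fun f => f 0) this
      simpa [Finsupp.single_apply, hei0, Ne.symm hei0] using h1
  set σ' : R → R := fun r => b.repr (x i * (r : A)) ei with hσ'
  set δ' : R → R := fun r => b.repr (x i * (r : A)) 0 with hδ'
  -- key identity, plus nonvanishing of σ' on nonzero elements
  have L : ∀ r : R, (x i * (r : A) = (σ' r : A) * x i + (δ' r : A)) ∧ (r ≠ 0 → σ' r ≠ 0) := by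
    intro r
    rcases eq_or_ne r 0 with rfl | hr
    · refine ⟨by simp [hσ', hδ'], fun hc => absurd rfl hc⟩
    · obtain ⟨c, hcR, hc0, hmem⟩ := h.coeff_comm i (r : A) r.2 (by
        simpa using (Subtype.coe_injective.ne hr))
      set C : R := ⟨c, hcR⟩ with hC
      set r0 : R := ⟨_, hmem⟩ with hr0
      have heq : x i * (r : A) = (C : A) * x i + (r0 : A) := by
        show x i * (r : A) = c * x i + (x i * (r : A) - c * x i)
        abel
      have hσv : σ' r = C := by
        show (b.repr (x i * (r : A))) ei = C
        rw [heq, hrepr]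
        simp [Finsupp.single_apply, Ne.symm hei0]
      have hδv : δ' r = r0 := by
        show (b.repr (x i * (r : A))) 0 = r0
        rw [heq, hrepr]
        simp [Finsupp.single_apply, hei0]
      refine ⟨by rw [hσv, hδv]; exact heq, fun _ hc => ?_⟩
      apply hc0
      have : (σ' r : A) = 0 := by rw [hc]; rfl
      rw [hσv] at this
      exact this
  have key : ∀ r : R, x i * (r : A) = (σ' r : A) * x i + (δ' r : A) := fun r => (L r).1
  have σadd : ∀ r s : R, σ' (r + s) = σ' r + σ' s := by
    intro r s
    show (b.repr (x i * ((r : A) + s))) ei = _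
    rw [mul_add, map_add]
    rfl
  have δadd : ∀ r s : R, δ' (r + s) = δ' r + δ' s := by
    intro r s
    show (b.repr (x i * ((r : A) + s))) 0 = _
    rw [mul_add, map_add]
    rfl
  have hmul : ∀ r s : R, σ' (r * s) = σ' r * σ' s ∧ δ' (r * s) = σ' r * δ' s + δ' r * s := by
    intro r s
    have e1 : x i * ((r * s : R) : A)
        = ((σ' r * σ' s : R) : A) * x i + ((σ' r * δ' s + δ' r * s : R) : A) := by
      push_cast
      calc x i * ((r : A) * s) = (x i * r) * s := by noncomm_ring
        _ = ((σ' r : A) * x i + δ' r) * s := by rw [key r]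
        _ = (σ' r : A) * (x i * s) + (δ' r : A) * s := by noncomm_ring
        _ = (σ' r : A) * ((σ' s : A) * x i + δ' s) + (δ' r : A) * s := by rw [key s]
        _ = _ := by noncomm_ring
    exact huniq _ _ _ _ ((key (r * s)).symm.trans e1)
  have hone : σ' 1 = 1 := by
    have e1 : x i * ((1 : R) : A) = ((1 : R) : A) * x i + ((0 : R) : A) := by
      push_cast
      rw [mul_one, one_mul, add_zero]
    exact (huniq _ _ _ _ ((key 1).symm.trans e1)).1
  have σzero : σ' 0 = 0 := by
    show (b.repr (x i * ((0 : R) : A))) ei = 0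
    simp
  set σ : R →+* R :=
    { toFun := σ', map_one' := hone, map_mul' := fun r s => (hmul r s).1,
      map_zero' := σzero, map_add' := σadd } with hσ
  have hinj : Function.Injective σ := by
    intro a b' hab
    by_contra hne
    have hd : a - b' ≠ 0 := sub_ne_zero.mpr hne
    have hz : σ (a - b') = 0 := by rw [map_sub, hab, sub_self]
    exact (L (a - b')).2 hd hz
  exact ⟨σ, hinj, δ', δadd, fun r s => (hmul r s).2, key⟩
end
end

section
/- A finite collection X₁,…,X_z of subspaces of a K-vector space W is distributive if and only if there exists a direct sum decomposition W = ⊕_{j∈J} Wⱼ of W into subspaces such that each Xᵢ is the sum of a subfamily of the Wⱼ's, i.e. for each i there is Jᵢ ⊆ J with Xᵢ = Σ_{j∈Jᵢ} Wⱼ. -/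
noncomputable section

/-- The sublattice of the lattice of `K`-subspaces of `W` generated by a set `S` of
subspaces: the smallest collection of subspaces containing `S` and closed under
intersection and sum. -/
def sublatticeGen {K W : Type*} [Field K] [AddCommGroup W] [Module K W]
    (S : Set (Submodule K W)) : Set (Submodule K W) :=
  ⋂₀ {T : Set (Submodule K W) | S ⊆ T ∧
    (∀ a ∈ T, ∀ b ∈ T, a ⊓ b ∈ T) ∧ (∀ a ∈ T, ∀ b ∈ T, a ⊔ b ∈ T)}

/-- A collection `S` of subspaces of `W` is distributive if the sublattice of subspaces
it generates is distributive. -/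
def IsDistributiveCollection {K W : Type*} [Field K] [AddCommGroup W] [Module K W]
    (S : Set (Submodule K W)) : Prop :=
  ∀ a ∈ sublatticeGen S, ∀ b ∈ sublatticeGen S, ∀ c ∈ sublatticeGen S,
    a ⊓ (b ⊔ c) = (a ⊓ b) ⊔ (a ⊓ c)

universe u v

section Helpers

variable {K : Type u} {W : Type v} [Field K] [AddCommGroup W] [Module K W]

lemma subset_sublatticeGen (S : Set (Submodule K W)) : S ⊆ sublatticeGen S :=
  fun _ hx => Set.mem_sInter.2 fun _ hT => hT.1 hx

lemma sublatticeGen_inf_mem {S : Set (Submodule K W)} {a b : Submodule K W}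
    (ha : a ∈ sublatticeGen S) (hb : b ∈ sublatticeGen S) : a ⊓ b ∈ sublatticeGen S :=
  Set.mem_sInter.2 fun T hT => hT.2.1 a (Set.mem_sInter.1 ha T hT) b (Set.mem_sInter.1 hb T hT)

lemma sublatticeGen_sup_mem {S : Set (Submodule K W)} {a b : Submodule K W}
    (ha : a ∈ sublatticeGen S) (hb : b ∈ sublatticeGen S) : a ⊔ b ∈ sublatticeGen S :=
  Set.mem_sInter.2 fun T hT => hT.2.2 a (Set.mem_sInter.1 ha T hT) b (Set.mem_sInter.1 hb T hT)

/-- Key lemma for the backward direction: intersections of partial sups of an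
independent family are given by intersections of index sets. -/
lemma biSup_inf_biSup_of_indep {J : Type*} {Wj : J → Submodule K W} (h : iSupIndep Wj)
    (s t : Set J) :
    (⨆ j ∈ s, Wj j) ⊓ (⨆ j ∈ t, Wj j) = ⨆ j ∈ s ∩ t, Wj j := by
  classical
  apply le_antisymm
  · intro x hx
    obtain ⟨hxs, hxt⟩ := Submodule.mem_inf.1 hx
    rw [Submodule.mem_biSup_iff_exists_dfinsupp] at hxs hxt
    obtain ⟨f, hf⟩ := hxs
    obtain ⟨g, hg⟩ := hxt
    have hinj := (iSupIndep_iff_dfinsupp_lsum_injective Wj).1 h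
    have hFG : f.filter (· ∈ s) = g.filter (· ∈ t) := hinj (by rw [hf, hg])
    rw [Submodule.mem_biSup_iff_exists_dfinsupp]
    refine ⟨f.filter (· ∈ s), ?_⟩
    have hfilt : (f.filter (· ∈ s)).filter (· ∈ s ∩ t) = f.filter (· ∈ s) := by
      ext j
      simp only [DFinsupp.filter_apply]
      by_cases hjs : j ∈ s
      · by_cases hjt : j ∈ t
        · simp [Set.mem_inter_iff, hjs, hjt]
        · have hcong := congrFun (congrArg DFunLike.coe hFG) j
          simp only [DFinsupp.filter_apply, hjs, hjt, if_true, if_false] at hcong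
          simp [Set.mem_inter_iff, hjs, hjt, hcong]
      · simp [Set.mem_inter_iff, hjs]
    rw [hfilt, hf]
  · exact le_inf (biSup_mono fun j hj => hj.1) (biSup_mono fun j hj => hj.2)

end Helpers

section Helpers2

variable {K : Type u} {W : Type v} [Field K] [AddCommGroup W] [Module K W]

lemma backward_direction {z : ℕ} (X : Fin z → Submodule K W)
    (h : ∃ (J : Type v) (Wj : J → Submodule K W),
        iSupIndep Wj ∧ (⨆ j, Wj j) = ⊤ ∧
        ∀ i : Fin z, ∃ s : Set J, X i = ⨆ j ∈ s, Wj j) :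
    IsDistributiveCollection (Set.range X) := by
  obtain ⟨J, Wj, hind, -, hX⟩ := h
  have hT : sublatticeGen (Set.range X) ⊆ {Y | ∃ s : Set J, Y = ⨆ j ∈ s, Wj j} := by
    apply Set.sInter_subset_of_mem
    refine ⟨?_, ?_, ?_⟩
    · rintro _ ⟨i, rfl⟩; exact (hX i).imp fun s hs => hs
    · rintro a ⟨s, rfl⟩ b ⟨t, rfl⟩
      exact ⟨s ∩ t, biSup_inf_biSup_of_indep hind s t⟩
    · rintro a ⟨s, rfl⟩ b ⟨t, rfl⟩
      exact ⟨s ∪ t, iSup_union.symm⟩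
  intro a ha b hb c hc
  obtain ⟨s, rfl⟩ := hT ha
  obtain ⟨t, rfl⟩ := hT hb
  obtain ⟨u, rfl⟩ := hT hc
  rw [← iSup_union, biSup_inf_biSup_of_indep hind, biSup_inf_biSup_of_indep hind,
    biSup_inf_biSup_of_indep hind, ← iSup_union, Set.inter_union_distrib_left]

end Helpers2

section Forward

variable {K : Type u} {W : Type v} [Field K] [AddCommGroup W] [Module K W]

/-- Finite sups of members of a sup-closed set containing `⊥` stay in the set. -/
lemma finsetSup_mem {ι : Type*} (L : Set (Submodule K W)) (hbot : ⊥ ∈ L)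
    (hsup : ∀ a ∈ L, ∀ b ∈ L, a ⊔ b ∈ L) (F : Finset ι) (g : ι → Submodule K W)
    (hg : ∀ i ∈ F, g i ∈ L) : F.sup g ∈ L := by
  classical
  induction F using Finset.induction_on with
  | empty => simpa using hbot
  | insert _ _ hx IH =>
    rw [Finset.sup_insert]
    exact hsup _ (hg _ (Finset.mem_insert_self _ _))
      _ (IH fun i hi => hg i (Finset.mem_insert_of_mem hi))

/-- Finite infs of members of an inf-closed set containing `⊤` stay in the set. -/
lemma finsetInf_mem {ι : Type*} (L : Set (Submodule K W)) (htop : ⊤ ∈ L)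
    (hinf : ∀ a ∈ L, ∀ b ∈ L, a ⊓ b ∈ L) (F : Finset ι) (g : ι → Submodule K W)
    (hg : ∀ i ∈ F, g i ∈ L) : F.inf g ∈ L := by
  classical
  induction F using Finset.induction_on with
  | empty => simpa using htop
  | insert _ _ hx IH =>
    rw [Finset.inf_insert]
    exact hinf _ (hg _ (Finset.mem_insert_self _ _))
      _ (IH fun i hi => hg i (Finset.mem_insert_of_mem hi))

/-- Distributivity over finite sups, given ternary distributivity on a class `L`. -/
lemma inf_finsetSup {ι : Type*} (L : Set (Submodule K W)) (hbot : ⊥ ∈ L)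
    (hsup : ∀ a ∈ L, ∀ b ∈ L, a ⊔ b ∈ L)
    (hdist : ∀ a ∈ L, ∀ b ∈ L, ∀ c ∈ L, a ⊓ (b ⊔ c) = (a ⊓ b) ⊔ (a ⊓ c))
    (F : Finset ι) (g : ι → Submodule K W) (hg : ∀ i ∈ F, g i ∈ L)
    {a : Submodule K W} (ha : a ∈ L) :
    a ⊓ F.sup g = F.sup fun i => a ⊓ g i := by
  classical
  induction F using Finset.induction_on with
  | empty => simp
  | @insert x F hx IH =>
    rw [Finset.sup_insert, Finset.sup_insert,
      hdist a ha (g x) (hg x (Finset.mem_insert_self _ _))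
        (F.sup g) (finsetSup_mem L hbot hsup F g fun i hi => hg i (Finset.mem_insert_of_mem hi)),
      IH fun i hi => hg i (Finset.mem_insert_of_mem hi)]

/-- The key decomposition for a finite distributive sublattice of subspaces containing
`⊥` and `⊤`. -/
lemma key_decomposition (L : Set (Submodule K W)) (hfin : L.Finite)
    (hbot : ⊥ ∈ L) (htop : ⊤ ∈ L)
    (hinf : ∀ a ∈ L, ∀ b ∈ L, a ⊓ b ∈ L)
    (hsup : ∀ a ∈ L, ∀ b ∈ L, a ⊔ b ∈ L)
    (hdist : ∀ a ∈ L, ∀ b ∈ L, ∀ c ∈ L, a ⊓ (b ⊔ c) = (a ⊓ b) ⊔ (a ⊓ c)) :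
    ∃ (J : Type v) (C : J → Submodule K W),
      iSupIndep C ∧ (⨆ j, C j) = ⊤ ∧ ∀ x ∈ L, ∃ s : Set J, x = ⨆ j ∈ s, C j := by
  classical
  set Lf : Finset (Submodule K W) := hfin.toFinset with hLf
  have hmemLf : ∀ x : Submodule K W, x ∈ Lf ↔ x ∈ L := fun x => hfin.mem_toFinset
  -- the "lower" part of a lattice element
  set lower : Submodule K W → Submodule K W :=
    fun a => (Lf.filter (· < a)).sup id with hlowerdef
  have hlower_mem : ∀ a, lower a ∈ L := by
    intro a
    exact finsetSup_mem L hbot hsup _ _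
      (fun i hi => (hmemLf i).1 (Finset.mem_filter.1 hi).1)
  have hlower_le : ∀ a, lower a ≤ a := by
    intro a
    exact Finset.sup_le fun x hx => le_of_lt (Finset.mem_filter.1 hx).2
  have hle_lower : ∀ a x, x ∈ L → x < a → x ≤ lower a := by
    intro a x hxL hxa
    exact Finset.le_sup (f := id) (Finset.mem_filter.2 ⟨(hmemLf x).2 hxL, hxa⟩)
  -- rank function
  set rank : Submodule K W → ℕ := fun a => (Lf.filter (· < a)).card with hrankdef
  have hrank_lt : ∀ a x, x ∈ L → x < a → rank x < rank a := by
    intro a x hxL hxa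
    apply Finset.card_lt_card
    constructor
    · intro y hy
      obtain ⟨hy1, hy2⟩ := Finset.mem_filter.1 hy
      exact Finset.mem_filter.2 ⟨hy1, hy2.trans hxa⟩
    · intro hsub
      have hx : x ∈ Lf.filter (· < a) := Finset.mem_filter.2 ⟨(hmemLf x).2 hxL, hxa⟩
      have := Finset.mem_filter.1 (hsub hx)
      exact lt_irrefl x this.2
  -- the index type: join-irreducible elements of L
  set J : Type v := {p : Submodule K W // p ∈ L ∧ lower p < p} with hJdef
  haveI : Finite J :=
    Set.Finite.to_subtype (hfin.subset (fun p hp => hp.1))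
  -- choice of complements
  have hcomp : ∀ p : J, ∃ c : Submodule K W,
      c ≤ (p : Submodule K W) ∧ lower (p : Submodule K W) ⊔ c = (p : Submodule K W) ∧
        lower (p : Submodule K W) ⊓ c = ⊥ := by
    rintro ⟨P, hPL, hPlt⟩
    obtain ⟨r, hr⟩ := Submodule.exists_isCompl (Submodule.comap P.subtype (lower P))
    have hmapq : Submodule.map P.subtype (Submodule.comap P.subtype (lower P)) = lower P := by
      rw [Submodule.map_comap_subtype, inf_eq_right.2 (hlower_le P)]
    refine ⟨Submodule.map P.subtype r, Submodule.map_subtype_le _ _, ?_, ?_⟩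
    · show lower P ⊔ Submodule.map P.subtype r = P
      rw [← hmapq, ← Submodule.map_sup, hr.sup_eq_top, Submodule.map_top,
        Submodule.range_subtype]
    · show lower P ⊓ Submodule.map P.subtype r = ⊥
      rw [← hmapq, ← Submodule.map_inf _ (Submodule.injective_subtype P), hr.inf_eq_bot,
        Submodule.map_bot]
  choose C hC_le hC_sup hC_inf using hcomp
  -- Claim 1: every element of L is the sup of the C p for join-irreducible p below it
  have claim1 : ∀ a ∈ L, a = ⨆ p ∈ {p : J | (p : Submodule K W) ≤ a}, C p := by
    have main : ∀ n : ℕ, ∀ a, a ∈ L → rank a < n →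
        a = ⨆ p ∈ {p : J | (p : Submodule K W) ≤ a}, C p := by
      intro n
      induction n with
      | zero => intro a _ h; exact absurd h (Nat.not_lt_zero _)
      | succ n IH =>
        intro a haL hrk
        have hge : (⨆ p ∈ {p : J | (p : Submodule K W) ≤ a}, C p) ≤ a :=
          iSup₂_le fun p hp => (hC_le p).trans hp
        refine le_antisymm ?_ hge
        by_cases hlt : lower a < a
        · set pa : J := ⟨a, haL, hlt⟩ with hpa
          have hlow : lower a = ⨆ p ∈ {p : J | (p : Submodule K W) ≤ lower a}, C p :=
            IH (lower a) (hlower_mem a)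
              (lt_of_lt_of_le (hrank_lt a (lower a) (hlower_mem a) hlt) (Nat.lt_succ_iff.1 hrk))
          have h1 : lower a ≤ ⨆ p ∈ {p : J | (p : Submodule K W) ≤ a}, C p := by
            rw [hlow]
            exact biSup_mono fun p hp => le_trans hp (hlower_le a)
          have h2 : C pa ≤ ⨆ p ∈ {p : J | (p : Submodule K W) ≤ a}, C p :=
            le_biSup _ (le_refl a)
          calc a = lower a ⊔ C pa := (hC_sup pa).symm
            _ ≤ _ := sup_le h1 h2
        · have heq : lower a = a := ((hlower_le a).lt_or_eq).resolve_left hlt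
          conv_lhs => rw [← heq]
          apply Finset.sup_le
          intro x hx
          obtain ⟨hx1, hx2⟩ := Finset.mem_filter.1 hx
          have hxL := (hmemLf x).1 hx1
          have hxeq := IH x hxL
            (lt_of_lt_of_le (hrank_lt a x hxL hx2) (Nat.lt_succ_iff.1 hrk))
          rw [id_eq, hxeq]
          exact biSup_mono fun p hp => le_trans hp (le_of_lt hx2)
    intro a ha
    exact main (rank a + 1) a ha (Nat.lt_succ_self _)
  -- base disjointness
  have hbase : ∀ (q : J) (G : Finset J),
      (∀ p ∈ G, ¬ ((q : Submodule K W) ≤ (p : Submodule K W))) →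
      Disjoint (C q) (G.sup fun p => C p) := by
    intro q G hG
    rw [disjoint_iff]
    have h1 : (G.sup fun p => C p) ≤ G.sup (fun p => (p : Submodule K W)) :=
      Finset.sup_mono_fun fun p _ => hC_le p
    have h2 : (q : Submodule K W) ⊓ G.sup (fun p => (p : Submodule K W)) ≤
        lower (q : Submodule K W) := by
      rw [inf_finsetSup L hbot hsup hdist G _ (fun p _ => p.2.1) q.2.1]
      apply Finset.sup_le
      intro p hp
      apply hle_lower
      · exact hinf _ q.2.1 _ p.2.1
      · refine lt_of_le_of_ne inf_le_left fun h => hG p hp ?_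
        exact inf_eq_left.1 h
    have hmain : C q ⊓ G.sup (fun p => C p) ≤ lower (q : Submodule K W) ⊓ C q := by
      apply le_inf
      · exact le_trans (inf_le_inf (hC_le q) h1) h2
      · exact inf_le_left
    rw [le_antisymm (hmain.trans (le_of_eq (hC_inf q))) bot_le]
  -- main disjointness
  have hdisj : ∀ G : Finset J, ∀ q : J, q ∉ G → Disjoint (C q) (G.sup fun p => C p) := by
    intro G
    induction G using Finset.strongInduction with
    | _ G IHG =>
      intro q hq
      rcases G.eq_empty_or_nonempty with rfl | hne
      · simp
      obtain ⟨m, hmG, hmax⟩ := G.exists_max_image (fun p => rank (p : Submodule K W)) hne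
      by_cases hcase : rank (m : Submodule K W) ≤ rank (q : Submodule K W)
      · apply hbase
        intro p hp hle
        have hne' : (q : Submodule K W) ≠ (p : Submodule K W) := by
          intro h
          exact hq (by rwa [show q = p from Subtype.coe_injective h])
        have h1 := hrank_lt _ _ q.2.1 (lt_of_le_of_ne hle hne')
        have h2 := hmax p hp
        omega
      · push_neg at hcase
        have hqm : q ≠ m := fun h => by rw [h] at hcase; exact lt_irrefl _ hcase
        have hdm : Disjoint (C m) ((insert q (G.erase m)).sup fun p => C p) := by
          apply hbase
          intro p hp hle
          rcases Finset.mem_insert.1 hp with rfl | hp'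
          · rcases eq_or_lt_of_le hle with h | h
            · exact hqm (Subtype.coe_injective h.symm)
            · have h1 := hrank_lt _ _ m.2.1 h
              omega
          · have hpm : p ≠ m := Finset.ne_of_mem_erase hp'
            rcases eq_or_lt_of_le hle with h | h
            · exact hpm (Subtype.coe_injective h).symm
            · have h1 := hrank_lt _ _ m.2.1 h
              have h2 := hmax p (Finset.mem_of_mem_erase hp')
              omega
        rw [disjoint_iff, eq_bot_iff]
        intro x hx
        obtain ⟨hx1, hx2⟩ := Submodule.mem_inf.1 hx
        have hGsup : G.sup (fun p => C p) = C m ⊔ (G.erase m).sup fun p => C p := by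
          conv_lhs => rw [← Finset.insert_erase hmG]
          rw [Finset.sup_insert]
        rw [hGsup] at hx2
        obtain ⟨y, hy, zz, hz, hyz⟩ := Submodule.mem_sup.1 hx2
        have hymem : y ∈ (insert q (G.erase m)).sup fun p => C p := by
          have hxm : x ∈ (insert q (G.erase m)).sup fun p => C p := by
            rw [Finset.sup_insert]
            exact Submodule.mem_sup_left hx1
          have hzm : zz ∈ (insert q (G.erase m)).sup fun p => C p := by
            rw [Finset.sup_insert]
            exact Submodule.mem_sup_right hz
          have : y = x - zz := eq_sub_of_add_eq hyz
          rw [this]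
          exact Submodule.sub_mem _ hxm hzm
        have hy0 : y = 0 := by
          have := (disjoint_iff.1 hdm) ▸ (Submodule.mem_inf.2 ⟨hy, hymem⟩)
          simpa using this
        have hxz : x = zz := by rw [← hyz, hy0, zero_add]
        have hqe : q ∉ G.erase m := fun h => hq (Finset.mem_of_mem_erase h)
        have hIH := IHG (G.erase m) (Finset.erase_ssubset hmG) q hqe
        have := (disjoint_iff.1 hIH) ▸ (Submodule.mem_inf.2 ⟨hx1, hxz ▸ hz⟩)
        simpa using this
  -- independence
  have hindep : iSupIndep C := by
    rw [iSupIndep_def]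
    intro q
    rw [disjoint_iff, eq_bot_iff]
    intro x hx
    obtain ⟨hx1, hx2⟩ := Submodule.mem_inf.1 hx
    rw [iSup_subtype', Submodule.mem_iSup_iff_exists_finset] at hx2
    obtain ⟨s, hs⟩ := hx2
    have hle : (⨆ j ∈ s, C (j : {j : J // j ≠ q})) ≤ (s.image Subtype.val).sup fun p => C p :=
      iSup₂_le fun j hj => Finset.le_sup (Finset.mem_image_of_mem _ hj)
    have hqns : q ∉ s.image Subtype.val := by
      intro h
      obtain ⟨j, _, hj2⟩ := Finset.mem_image.1 h
      exact j.2 hj2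
    have := (disjoint_iff.1 (hdisj _ q hqns)) ▸ (Submodule.mem_inf.2 ⟨hx1, hle hs⟩)
    simpa using this
  refine ⟨J, C, hindep, ?_, ?_⟩
  · apply le_antisymm le_top
    conv_lhs => rw [claim1 ⊤ htop]
    exact iSup₂_le fun p _ => le_iSup C p
  · intro x hxL
    exact ⟨{p : J | (p : Submodule K W) ≤ x}, claim1 x hxL⟩

end Forward

/-- A finite collection `X₁,…,X_z` of subspaces of a `K`-vector space `W`
is distributive iff there is a direct sum decomposition `W = ⊕_{j∈J} Wⱼ` such that each
`Xᵢ` is the sum of a subfamily of the `Wⱼ`'s. -/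
theorem distributive_iff_directSum_decomposition
    {K : Type u} {W : Type v} [Field K] [AddCommGroup W] [Module K W]
    {z : ℕ} (X : Fin z → Submodule K W) :
    IsDistributiveCollection (Set.range X) ↔
      ∃ (J : Type v) (Wj : J → Submodule K W),
        iSupIndep Wj ∧ (⨆ j, Wj j) = ⊤ ∧
        ∀ i : Fin z, ∃ s : Set J, X i = ⨆ j ∈ s, Wj j := by
  constructor
  · intro hd
    classical
    set G : Set (Submodule K W) := sublatticeGen (Set.range X) with hG
    set D : Set (Submodule K W) := insert ⊥ (insert ⊤ G) with hD
    have hGD : G ⊆ D := fun x hx => Set.mem_insert_iff.2 <| Or.inr <|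
      Set.mem_insert_iff.2 (Or.inr hx)
    have hbotD : ⊥ ∈ D := Set.mem_insert _ _
    have htopD : ⊤ ∈ D := Set.mem_insert_iff.2 <| Or.inr <| Set.mem_insert _ _
    have hDdist : ∀ a ∈ D, ∀ b ∈ D, ∀ c ∈ D, a ⊓ (b ⊔ c) = (a ⊓ b) ⊔ (a ⊓ c) := by
      intro a ha b hb c hc
      simp only [hD, Set.mem_insert_iff] at ha hb hc
      rcases ha with rfl | rfl | ha
      · simp
      · simp
      rcases hb with rfl | rfl | hb
      · simp
      · rw [top_sup_eq, inf_top_eq]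
        exact (sup_eq_left.2 inf_le_left).symm
      rcases hc with rfl | rfl | hc
      · simp
      · rw [sup_top_eq, inf_top_eq]
        exact (sup_eq_right.2 inf_le_left).symm
      · exact hd a ha b hb c hc
    have hDinf : ∀ a ∈ D, ∀ b ∈ D, a ⊓ b ∈ D := by
      intro a ha b hb
      simp only [hD, Set.mem_insert_iff] at ha hb ⊢
      rcases ha with rfl | rfl | ha
      · exact Or.inl (by simp)
      · rw [top_inf_eq]; exact hb
      rcases hb with rfl | rfl | hb
      · exact Or.inl (by simp)
      · rw [inf_top_eq]; exact Or.inr (Or.inr ha)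
      · exact Or.inr (Or.inr (sublatticeGen_inf_mem ha hb))
    have hDsup : ∀ a ∈ D, ∀ b ∈ D, a ⊔ b ∈ D := by
      intro a ha b hb
      simp only [hD, Set.mem_insert_iff] at ha hb ⊢
      rcases ha with rfl | rfl | ha
      · rw [bot_sup_eq]; exact hb
      · exact Or.inr (Or.inl (by simp))
      rcases hb with rfl | rfl | hb
      · rw [sup_bot_eq]; exact Or.inr (Or.inr ha)
      · exact Or.inr (Or.inl (by simp))
      · exact Or.inr (Or.inr (sublatticeGen_sup_mem ha hb))
    set m : Finset (Fin z) → Submodule K W := fun A => A.inf X with hm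
    set f : Finset (Finset (Fin z)) → Submodule K W := fun 𝒜 => 𝒜.sup m with hf
    have hmD : ∀ A, m A ∈ D := fun A => finsetInf_mem D htopD hDinf A X
      (fun i _ => hGD (subset_sublatticeGen _ ⟨i, rfl⟩))
    have hfD : ∀ 𝒜, f 𝒜 ∈ D := fun 𝒜 => finsetSup_mem D hbotD hDsup 𝒜 m (fun A _ => hmD A)
    set L : Set (Submodule K W) := Set.range f with hL
    have hLfin : L.Finite := Set.finite_range f
    have hLbot : ⊥ ∈ L := ⟨∅, by simp [hf]⟩
    have hLtop : ⊤ ∈ L := ⟨{∅}, by simp [hf, hm]⟩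
    have hLX : ∀ i, X i ∈ L := fun i => ⟨{{i}}, by simp [hf, hm]⟩
    have hLD : L ⊆ D := by rintro _ ⟨𝒜, rfl⟩; exact hfD 𝒜
    have hLsup : ∀ a ∈ L, ∀ b ∈ L, a ⊔ b ∈ L := by
      rintro _ ⟨𝒜, rfl⟩ _ ⟨ℬ, rfl⟩
      exact ⟨𝒜 ∪ ℬ, Finset.sup_union⟩
    have hLinf : ∀ a ∈ L, ∀ b ∈ L, a ⊓ b ∈ L := by
      rintro _ ⟨𝒜, rfl⟩ _ ⟨ℬ, rfl⟩
      refine ⟨(𝒜 ×ˢ ℬ).image (fun p => p.1 ∪ p.2), ?_⟩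
      have hcalc : f ((𝒜 ×ˢ ℬ).image (fun p => p.1 ∪ p.2)) = f 𝒜 ⊓ f ℬ := by
        calc f ((𝒜 ×ˢ ℬ).image (fun p => p.1 ∪ p.2))
            = (𝒜 ×ˢ ℬ).sup (fun p => m (p.1 ∪ p.2)) := Finset.sup_image _ _ _
          _ = 𝒜.sup (fun A => ℬ.sup fun B => m (A ∪ B)) := Finset.sup_product_left _ _ _
          _ = 𝒜.sup (fun A => m A ⊓ f ℬ) := by
              refine Finset.sup_congr rfl fun A _ => ?_
              rw [inf_finsetSup D hbotD hDsup hDdist ℬ m (fun B _ => hmD B) (hmD A)]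
              exact Finset.sup_congr rfl fun B _ => Finset.inf_union
          _ = 𝒜.sup (fun A => f ℬ ⊓ m A) := by simp_rw [inf_comm]
          _ = f ℬ ⊓ f 𝒜 :=
              (inf_finsetSup D hbotD hDsup hDdist 𝒜 m (fun A _ => hmD A) (hfD ℬ)).symm
          _ = f 𝒜 ⊓ f ℬ := inf_comm _ _
      exact hcalc
    have hLdist : ∀ a ∈ L, ∀ b ∈ L, ∀ c ∈ L, a ⊓ (b ⊔ c) = (a ⊓ b) ⊔ (a ⊓ c) :=
      fun a ha b hb c hc => hDdist a (hLD ha) b (hLD hb) c (hLD hc)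
    obtain ⟨J, C, h1, h2, h3⟩ :=
      key_decomposition L hLfin hLbot hLtop hLinf hLsup hLdist
    exact ⟨J, C, h1, h2, fun i => h3 (X i) (hLX i)⟩
  · exact backward_direction X
end
end

section
/- A finite collection X₁,…,X_z of subspaces of a K-vector space W is distributive if and only if there exists a basis B of W such that each Xᵢ is the K-linear span of a subset of B. -/
noncomputable section

namespace DistribAux

variable {K W : Type*} [Field K] [AddCommGroup W] [Module K W]

lemma mem_gen {S : Set (Submodule K W)} {p : Submodule K W} (hp : p ∈ S) :
    p ∈ sublatticeGen S :=
  fun _ hT => hT.1 hp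

lemma inf_mem_gen {S : Set (Submodule K W)} {a b : Submodule K W}
    (ha : a ∈ sublatticeGen S) (hb : b ∈ sublatticeGen S) : a ⊓ b ∈ sublatticeGen S :=
  fun T hT => hT.2.1 a (ha T hT) b (hb T hT)

lemma sup_mem_gen {S : Set (Submodule K W)} {a b : Submodule K W}
    (ha : a ∈ sublatticeGen S) (hb : b ∈ sublatticeGen S) : a ⊔ b ∈ sublatticeGen S :=
  fun T hT => hT.2.2 a (ha T hT) b (hb T hT)

/-- Finset sup of a nonempty family of elements of the sublattice is in the sublattice. -/
lemma finsetSup_mem_gen {S : Set (Submodule K W)} {ι : Type*} (g : ι → Submodule K W)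
    (F : Finset ι) (hne : F.Nonempty) (hg : ∀ i ∈ F, g i ∈ sublatticeGen S) :
    F.sup g ∈ sublatticeGen S := by
  classical
  induction F using Finset.induction with
  | empty => exact absurd hne (by simp)
  | @insert a F ha ih =>
    rw [Finset.sup_insert]
    rcases F.eq_empty_or_nonempty with rfl | hne'
    · simpa using hg a (Finset.mem_insert_self a ∅)
    · exact sup_mem_gen (hg a (Finset.mem_insert_self a F))
        (ih hne' fun i hi => hg i (Finset.mem_insert_of_mem hi))

/-- Distributivity over a finite sup. -/
lemma inf_finsetSup {S : Set (Submodule K W)} (hd : IsDistributiveCollection S)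
    {a : Submodule K W} (ha : a ∈ sublatticeGen S) {ι : Type*} (g : ι → Submodule K W)
    (F : Finset ι) (hg : ∀ i ∈ F, g i ∈ sublatticeGen S) :
    a ⊓ F.sup g = F.sup (fun i => a ⊓ g i) := by
  classical
  induction F using Finset.induction with
  | empty => simp
  | @insert b F hb ih =>
    rw [Finset.sup_insert, Finset.sup_insert]
    rcases F.eq_empty_or_nonempty with rfl | hne'
    · simp
    · rw [hd a ha (g b) (hg b (Finset.mem_insert_self b F))
        (F.sup g) (finsetSup_mem_gen g F hne' fun i hi => hg i (Finset.mem_insert_of_mem hi)),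
        ih (fun i hi => hg i (Finset.mem_insert_of_mem hi))]

/-- Every subspace of `q` has a complement within `q`. -/
lemma exists_compl_le (p q : Submodule K W) (hpq : p ≤ q) :
    ∃ D : Submodule K W, D ≤ q ∧ p ⊔ D = q ∧ p ⊓ D = ⊥ := by
  obtain ⟨r, hr⟩ := Submodule.exists_isCompl (p.comap q.subtype)
  have hp : (p.comap q.subtype).map q.subtype = p := by
    rw [Submodule.map_comap_subtype, inf_eq_right.mpr hpq]
  refine ⟨r.map q.subtype, Submodule.map_subtype_le q r, ?_, ?_⟩
  · rw [← hp, ← Submodule.map_sup, hr.sup_eq_top, Submodule.map_top, Submodule.range_subtype]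
  · rw [← hp, ← Submodule.map_inf _ (Submodule.injective_subtype q), hr.inf_eq_bot,
      Submodule.map_bot]

/-- If the collection generated by finitely many subspaces is distributive, the generated
sublattice is finite: every element is a finite sup of finite infs of generators. -/
lemma gen_finite {z : ℕ} (X : Fin z → Submodule K W)
    (hd : IsDistributiveCollection (Set.range X)) :
    (sublatticeGen (Set.range X)).Finite := by
  classical
  set S := Set.range X with hS
  set L := sublatticeGen S with hLdef
  set g : Finset (Fin z) → Submodule K W := fun F => F.inf X with hgdef
  have hgL : ∀ F : Finset (Fin z), F.Nonempty → g F ∈ L := by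
    intro F hne
    induction F using Finset.induction with
    | empty => exact absurd hne (by simp)
    | @insert a F ha ih =>
      rcases F.eq_empty_or_nonempty with rfl | hne'
      · simpa [hgdef] using mem_gen (S := S) ⟨a, rfl⟩
      · have : g (insert a F) = X a ⊓ g F := by simp [hgdef]
        rw [this]
        exact inf_mem_gen (mem_gen ⟨a, rfl⟩) (ih hne')
  set T : Set (Submodule K W) :=
    {p | (∃ 𝒜 : Finset (Finset (Fin z)), (∀ F ∈ 𝒜, F.Nonempty) ∧ p = 𝒜.sup g) ∧ p ∈ L}
    with hTdef
  have hLT : L ⊆ T := by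
    intro p hp
    refine hp T ⟨?_, ?_, ?_⟩
    · -- S ⊆ T
      rintro _ ⟨i, rfl⟩
      refine ⟨⟨{{i}}, by simp, by simp [hgdef]⟩, mem_gen ⟨i, rfl⟩⟩
    · -- closed under ⊓
      rintro a ⟨⟨𝒜, h𝒜ne, rfl⟩, haL⟩ b ⟨⟨ℬ, hℬne, rfl⟩, hbL⟩
      refine ⟨⟨(𝒜 ×ˢ ℬ).image (fun P => P.1 ∪ P.2), ?_, ?_⟩, inf_mem_gen haL hbL⟩
      · intro F hF
        simp only [Finset.mem_image, Finset.mem_product] at hF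
        obtain ⟨⟨F1, F2⟩, ⟨h1, _⟩, rfl⟩ := hF
        obtain ⟨x, hx⟩ := h𝒜ne F1 h1
        exact ⟨x, Finset.mem_union_left _ hx⟩
      · rw [Finset.sup_image]
        have hgu : ∀ P : Finset (Fin z) × Finset (Fin z),
            g (P.1 ∪ P.2) = g P.1 ⊓ g P.2 := by
          intro P; simp [hgdef, Finset.inf_union]
        have : ((𝒜 ×ˢ ℬ).sup fun P => g (P.1 ∪ P.2))
            = (𝒜 ×ˢ ℬ).sup fun P => g P.1 ⊓ g P.2 := by
          apply Finset.sup_congr rfl; intro P _; exact hgu P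
        rw [Function.comp_def]
        rw [this, Finset.sup_product_left]
        have : (𝒜.sup fun F => ℬ.sup fun G => g F ⊓ g G)
            = 𝒜.sup fun F => g F ⊓ ℬ.sup g := by
          apply Finset.sup_congr rfl; intro F hF
          exact (inf_finsetSup hd (hgL F (h𝒜ne F hF)) g ℬ
            (fun G hG => hgL G (hℬne G hG))).symm
        rw [this]
        have : (𝒜.sup fun F => g F ⊓ ℬ.sup g) = 𝒜.sup fun F => (ℬ.sup g) ⊓ g F := by
          apply Finset.sup_congr rfl; intro F _; exact inf_comm _ _
        rw [this, ← inf_finsetSup hd hbL g 𝒜 (fun F hF => hgL F (h𝒜ne F hF)), inf_comm]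
    · -- closed under ⊔
      rintro a ⟨⟨𝒜, h𝒜ne, rfl⟩, haL⟩ b ⟨⟨ℬ, hℬne, rfl⟩, hbL⟩
      refine ⟨⟨𝒜 ∪ ℬ, ?_, ?_⟩, sup_mem_gen haL hbL⟩
      · intro F hF
        rcases Finset.mem_union.mp hF with h | h
        · exact h𝒜ne F h
        · exact hℬne F h
      · rw [Finset.sup_union]
  have hT : T.Finite := by
    have : T ⊆ Set.range (fun 𝒜 : Finset (Finset (Fin z)) => 𝒜.sup g) ∪ {⊥} := by
      rintro p ⟨⟨𝒜, _, rfl⟩, _⟩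
      exact Set.mem_union_left _ ⟨𝒜, rfl⟩
    exact Set.Finite.subset ((Set.finite_range _).union (Set.finite_singleton _)) this
  exact hT.subset hLT

end DistribAux

open DistribAux in
/-- A finite collection `X₁,…,X_z` of subspaces of a `K`-vector space `W`
is distributive iff there is a basis `B` of `W` such that each `Xᵢ` is the span of a
subset of `B`. -/
theorem distributive_iff_basis_spanning_subsets
    {K W : Type*} [Field K] [AddCommGroup W] [Module K W]
    {z : ℕ} (X : Fin z → Submodule K W) :
    IsDistributiveCollection (Set.range X) ↔
      ∃ B : Set W, LinearIndependent K (fun b : B => (b : W)) ∧ Submodule.span K B = ⊤ ∧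
        ∀ i : Fin z, ∃ s : Set W, s ⊆ B ∧ X i = Submodule.span K s := by
  classical
  constructor
  · intro hd
    set S := Set.range X with hSdef
    set L := sublatticeGen S with hLdef
    have hLfin : L.Finite := gen_finite X hd
    set FL : Finset (Submodule K W) := hLfin.toFinset with hFLdef
    have hmemFL : ∀ p : Submodule K W, p ∈ FL ↔ p ∈ L := fun p => hLfin.mem_toFinset
    set N : Submodule K W → Submodule K W :=
      fun a => (FL.filter (fun b => b < a)).sup id with hNdef
    have hNle : ∀ a, N a ≤ a :=
      fun a => Finset.sup_le (fun b hb => le_of_lt (Finset.mem_filter.mp hb).2)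
    have hDex : ∀ a : Submodule K W, ∃ D, D ≤ a ∧ N a ⊔ D = a ∧ N a ⊓ D = ⊥ :=
      fun a => exists_compl_le (N a) a (hNle a)
    choose D hDle hDsup hDinf using hDex
    have hbex : ∀ a : Submodule K W, ∃ s : Set W, s ⊆ (D a : Set W) ∧
        LinearIndependent K (fun x : s => (x : W)) ∧ Submodule.span K s = D a := by
      intro a
      obtain ⟨s, hs1, hs2, hs3⟩ := exists_linearIndependent K ((D a : Set W))
      exact ⟨s, hs1, hs3, by rw [hs2, Submodule.span_eq]⟩
    choose bs hbsub hbind hbspan using hbex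
    -- key: every element of L is the sup of the D b for b ≤ a
    have key : ∀ n : ℕ, ∀ a : Submodule K W, a ∈ L →
        (FL.filter (fun b => b < a)).card ≤ n →
        a ≤ (FL.filter (fun b => b ≤ a)).sup D := by
      intro n
      induction n with
      | zero =>
        intro a ha hcard
        have hemp : FL.filter (fun b => b < a) = ∅ :=
          Finset.card_eq_zero.mp (Nat.le_antisymm hcard (Nat.zero_le _))
        have hNa : N a = ⊥ := by rw [hNdef]; simp [hemp]
        calc a = N a ⊔ D a := (hDsup a).symm
          _ = D a := by rw [hNa, bot_sup_eq]
          _ ≤ (FL.filter (fun b => b ≤ a)).sup D := Finset.le_sup (Finset.mem_filter.mpr ⟨(hmemFL a).mpr ha, le_refl a⟩)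
      | succ n ih =>
        intro a ha hcard
        have h1 : D a ≤ (FL.filter (fun b => b ≤ a)).sup D :=
          Finset.le_sup (Finset.mem_filter.mpr ⟨(hmemFL a).mpr ha, le_refl a⟩)
        have h2 : N a ≤ (FL.filter (fun b => b ≤ a)).sup D := by
          apply Finset.sup_le
          intro b hb
          obtain ⟨hbF, hba⟩ := Finset.mem_filter.mp hb
          have hsub : FL.filter (fun c => c < b) ⊂ FL.filter (fun c => c < a) := by
            refine Finset.ssubset_iff_of_subset ?_ |>.mpr ⟨b, hb, by simp⟩
            intro c hc
            obtain ⟨hcF, hcb⟩ := Finset.mem_filter.mp hc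
            exact Finset.mem_filter.mpr ⟨hcF, hcb.trans hba⟩
          have hcb : (FL.filter (fun c => c < b)).card ≤ n :=
            Nat.lt_succ_iff.mp (lt_of_lt_of_le (Finset.card_lt_card hsub) hcard)
          have hble := ih b ((hmemFL b).mp hbF) hcb
          refine le_trans hble (Finset.sup_le ?_)
          intro c hc
          obtain ⟨hcF, hcb'⟩ := Finset.mem_filter.mp hc
          exact Finset.le_sup (Finset.mem_filter.mpr ⟨hcF, hcb'.trans hba.le⟩)
        calc a = N a ⊔ D a := (hDsup a).symm
          _ ≤ _ := sup_le h2 h1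
    have keyEq : ∀ a ∈ L, a = (FL.filter (fun b => b ≤ a)).sup D := by
      intro a ha
      refine le_antisymm (key _ a ha le_rfl) (Finset.sup_le ?_)
      intro b hb
      exact (hDle b).trans (Finset.mem_filter.mp hb).2
    -- main induction: unions of the bs over subsets of L are independent and span the sup
    have main : ∀ F : Finset (Submodule K W), ↑F ⊆ L →
        LinearIndependent K (fun x : ↥(⋃ a ∈ (F : Set (Submodule K W)), bs a) => (x : W)) ∧
        Submodule.span K (⋃ a ∈ (F : Set (Submodule K W)), bs a) = F.sup D := by
      intro F
      induction F using Finset.strongInduction with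
      | _ F ih =>
        intro hFL
        rcases F.eq_empty_or_nonempty with rfl | hne
        · constructor
          · rw [show (⋃ a ∈ ((∅ : Finset (Submodule K W)) : Set (Submodule K W)), bs a)
              = (∅ : Set W) by simp]
            exact linearIndependent_empty K W
          · simp
        · obtain ⟨m, hmF, hmax⟩ := Set.Finite.exists_maximalFor id (F : Set (Submodule K W)) F.finite_toSet
            (Finset.coe_nonempty.mpr hne)
          simp only [Finset.mem_coe, id_eq] at hmF hmax
          set F' := F.erase m with hF'def
          have hF'sub : ↑F' ⊆ L :=
            Set.Subset.trans (Finset.coe_subset.mpr (F.erase_subset m)) hFL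
          obtain ⟨hind', hspan'⟩ := ih F' (F.erase_ssubset hmF) hF'sub
          have hins : F = insert m F' := (Finset.insert_erase hmF).symm
          have hUnion : (⋃ a ∈ (F : Set (Submodule K W)), bs a)
              = bs m ∪ ⋃ a ∈ (F' : Set (Submodule K W)), bs a := by
            rw [hins, Finset.coe_insert, Set.biUnion_insert]
          have hmL : m ∈ L := hFL hmF
          -- disjointness
          have hdisj : Disjoint (Submodule.span K (bs m))
              (Submodule.span K (⋃ a ∈ (F' : Set (Submodule K W)), bs a)) := by
            rw [hbspan m, hspan', disjoint_iff]
            have h1 : F'.sup D ≤ F'.sup id := Finset.sup_mono_fun (fun b _ => hDle b)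
            have h2 : m ⊓ F'.sup id = F'.sup (fun b => m ⊓ b) :=
              inf_finsetSup hd hmL id F' (fun b hb => hF'sub hb)
            have h3 : F'.sup (fun b => m ⊓ b) ≤ N m := by
              apply Finset.sup_le
              intro b hb
              have hbm : b ≠ m := (Finset.mem_erase.mp hb).1
              have hbF : b ∈ F := (Finset.mem_erase.mp hb).2
              have hbL : b ∈ L := hFL hbF
              have hlt : m ⊓ b < m := by
                refine lt_of_le_of_ne inf_le_left (fun heq => ?_)
                have hmb : m ≤ b := by rw [← heq]; exact inf_le_right
                exact hbm (le_antisymm (hmax hbF hmb) hmb)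
              have hmemL : m ⊓ b ∈ L := inf_mem_gen hmL hbL
              exact Finset.le_sup (f := id)
                (Finset.mem_filter.mpr ⟨(hmemFL _).mpr hmemL, hlt⟩)
            have hfin : D m ⊓ F'.sup D ≤ N m ⊓ D m := by
              refine le_inf ?_ inf_le_left
              calc D m ⊓ F'.sup D ≤ m ⊓ F'.sup id := inf_le_inf (hDle m) h1
                _ = F'.sup (fun b => m ⊓ b) := h2
                _ ≤ N m := h3
            exact le_bot_iff.mp (hfin.trans (le_of_eq (hDinf m)))
          constructor
          · rw [hUnion]
            exact LinearIndepOn.id_union (hbind m) hind' hdisj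
          · rw [hUnion, Submodule.span_union, hbspan m, hspan', hins, Finset.sup_insert]
    have hFLL : (↑FL : Set (Submodule K W)) ⊆ L := by
      intro p hp; exact (hmemFL p).mp hp
    obtain ⟨hind0, hspan0⟩ := main FL hFLL
    set s0 : Set W := ⋃ a ∈ (FL : Set (Submodule K W)), bs a with hs0def
    have hind0' : LinearIndepOn K id s0 := hind0
    set B : Set W := hind0'.extend (Set.subset_univ s0) with hBdef
    have hs0B : s0 ⊆ B := hind0'.subset_extend _
    refine ⟨B, hind0'.linearIndepOn_extend (Set.subset_univ s0), ?_, ?_⟩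
    · refine eq_top_iff.mpr ?_
      intro x _
      exact hind0'.subset_span_extend (Set.subset_univ s0) (Set.mem_univ x)
    · intro i
      have hXi : X i ∈ L := mem_gen ⟨i, rfl⟩
      set F := FL.filter (fun b => b ≤ X i) with hFdef
      refine ⟨⋃ a ∈ (F : Set (Submodule K W)), bs a, ?_, ?_⟩
      · refine Set.Subset.trans ?_ hs0B
        exact Set.biUnion_subset_biUnion_left
          (Finset.coe_subset.mpr (Finset.filter_subset _ _))
      · obtain ⟨_, hsp⟩ := main F
          (Set.Subset.trans (Finset.coe_subset.mpr (Finset.filter_subset _ _)) hFLL)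
        rw [hsp]
        exact keyEq (X i) hXi
  · rintro ⟨B, hBind, hBspan, hX⟩
    -- build a basis indexed by B
    set b : Module.Basis B K W := Module.Basis.mk hBind
      (by rw [Subtype.range_coe]; exact hBspan.ge) with hbdef
    have hb : ∀ u : Set B, (⇑b) '' u = Subtype.val '' u := by
      intro u; rw [hbdef, Module.Basis.coe_mk]
    have himg : ∀ s : Set W, s ⊆ B → Subtype.val '' (Subtype.val ⁻¹' s : Set B) = s := by
      intro s hs
      rw [Subtype.image_preimage_coe]
      exact Set.inter_eq_right.mpr hs
    have span_inf : ∀ s t : Set W, s ⊆ B → t ⊆ B →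
        Submodule.span K s ⊓ Submodule.span K t = Submodule.span K (s ∩ t) := by
      intro s t hs ht
      refine le_antisymm ?_ (le_inf (Submodule.span_mono Set.inter_subset_left)
        (Submodule.span_mono Set.inter_subset_right))
      intro x hx
      obtain ⟨hxs, hxt⟩ := Submodule.mem_inf.mp hx
      have hxs' : x ∈ Submodule.span K ((⇑b) '' (Subtype.val ⁻¹' s)) := by
        rw [hb, himg s hs]; exact hxs
      have hxt' : x ∈ Submodule.span K ((⇑b) '' (Subtype.val ⁻¹' t)) := by
        rw [hb, himg t ht]; exact hxt
      have h1 := (b.mem_span_image).mp hxs'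
      have h2 := (b.mem_span_image).mp hxt'
      have h3 : (↑(b.repr x).support : Set B) ⊆ Subtype.val ⁻¹' (s ∩ t) := by
        rw [Set.preimage_inter]
        exact Set.subset_inter h1 h2
      have := (b.mem_span_image).mpr h3
      rwa [hb, himg (s ∩ t) (Set.Subset.trans Set.inter_subset_left hs)] at this
    set T : Set (Submodule K W) := {p | ∃ u : Set W, u ⊆ B ∧ p = Submodule.span K u}
      with hTdef
    have hgenT : sublatticeGen (Set.range X) ⊆ T := by
      intro p hp
      refine hp T ⟨?_, ?_, ?_⟩
      · rintro _ ⟨i, rfl⟩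
        obtain ⟨s, hsB, hXs⟩ := hX i
        exact ⟨s, hsB, hXs⟩
      · rintro a ⟨u, huB, rfl⟩ c ⟨v, hvB, rfl⟩
        exact ⟨u ∩ v, Set.Subset.trans Set.inter_subset_left huB,
          span_inf u v huB hvB⟩
      · rintro a ⟨u, huB, rfl⟩ c ⟨v, hvB, rfl⟩
        exact ⟨u ∪ v, Set.union_subset huB hvB, (Submodule.span_union u v).symm⟩
    intro a ha c hc e he
    obtain ⟨ua, huaB, rfl⟩ := hgenT ha
    obtain ⟨uc, hucB, rfl⟩ := hgenT hc
    obtain ⟨ue, hueB, rfl⟩ := hgenT he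
    rw [← Submodule.span_union, span_inf _ _ huaB (Set.union_subset hucB hueB),
      span_inf _ _ huaB hucB, span_inf _ _ huaB hueB, ← Submodule.span_union,
      Set.inter_union_distrib_left]

end
end

section
/- A finite collection X₁,…,X_z of subspaces of a K-vector space W is distributive if and only if there exists a basis B of W such that for every 1 ≤ i ≤ z the set B ∩ Xᵢ is a basis of the subspace Xᵢ. -/
noncomputable section

namespace DistributiveCollectionProof

open Submodule

variable {K W : Type*} [Field K] [AddCommGroup W] [Module K W]

/-- A complement of `N` inside `U`. -/
lemma exists_compl_within {N U : Submodule K W} (h : N ≤ U) :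
    ∃ C : Submodule K W, C ≤ U ∧ N ⊓ C = ⊥ ∧ N ⊔ C = U := by
  obtain ⟨q, hq⟩ := Submodule.exists_isCompl (comap U.subtype N)
  have hN : map U.subtype (comap U.subtype N) = N := by
    rw [map_comap_subtype, inf_eq_right.mpr h]
  refine ⟨map U.subtype q, map_subtype_le _ _, ?_, ?_⟩
  · calc N ⊓ map U.subtype q = map U.subtype (comap U.subtype N) ⊓ map U.subtype q := by rw [hN]
      _ = map U.subtype (comap U.subtype N ⊓ q) :=
        (Submodule.map_inf _ (Subtype.val_injective)).symm
      _ = ⊥ := by rw [hq.inf_eq_bot, Submodule.map_bot]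
  · calc N ⊔ map U.subtype q = map U.subtype (comap U.subtype N ⊔ q) := by
          rw [Submodule.map_sup, hN]
      _ = U := by rw [hq.sup_eq_top, map_subtype_top]


lemma finsetSup_mem (S : Finset (Submodule K W)) (hbot : (⊥ : Submodule K W) ∈ S)
    (hsupc : ∀ a ∈ S, ∀ b ∈ S, a ⊔ b ∈ S)
    {ι : Type*} (F : Finset ι) (f : ι → Submodule K W) (hf : ∀ j ∈ F, f j ∈ S) :
    F.sup f ∈ S := by
  classical
  induction F using Finset.induction_on with
  | empty => simpa using hbot
  | @insert j F hj ih =>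
    rw [Finset.sup_insert]
    exact hsupc _ (hf _ (Finset.mem_insert_self _ _))
      _ (ih fun x hx => hf _ (Finset.mem_insert_of_mem hx))

lemma inf_finsetSup (S : Finset (Submodule K W)) (hbot : (⊥ : Submodule K W) ∈ S)
    (hsupc : ∀ a ∈ S, ∀ b ∈ S, a ⊔ b ∈ S)
    (hd3 : ∀ a ∈ S, ∀ b ∈ S, ∀ c ∈ S, a ⊓ (b ⊔ c) = (a ⊓ b) ⊔ (a ⊓ c))
    {ι : Type*} (F : Finset ι) (f : ι → Submodule K W) (hf : ∀ j ∈ F, f j ∈ S)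
    {a : Submodule K W} (ha : a ∈ S) :
    a ⊓ F.sup f = F.sup (fun j => a ⊓ f j) := by
  classical
  induction F using Finset.induction_on with
  | empty => simp
  | @insert j F hj ih =>
    rw [Finset.sup_insert, Finset.sup_insert,
      hd3 a ha _ (hf _ (Finset.mem_insert_self _ _))
        _ (finsetSup_mem S hbot hsupc F f fun x hx => hf _ (Finset.mem_insert_of_mem hx)),
      ih fun x hx => hf _ (Finset.mem_insert_of_mem hx)]

theorem exists_common_basis (S : Finset (Submodule K W))
    (hbot : (⊥ : Submodule K W) ∈ S) (htop : (⊤ : Submodule K W) ∈ S)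
    (hinfc : ∀ a ∈ S, ∀ b ∈ S, a ⊓ b ∈ S)
    (hsupc : ∀ a ∈ S, ∀ b ∈ S, a ⊔ b ∈ S)
    (hd3 : ∀ a ∈ S, ∀ b ∈ S, ∀ c ∈ S, a ⊓ (b ⊔ c) = (a ⊓ b) ⊔ (a ⊓ c)) :
    ∃ B : Set W, LinearIndependent K (fun b : B => (b : W)) ∧ Submodule.span K B = ⊤ ∧
      ∀ U ∈ S, Submodule.span K ((B ∩ (U : Set W) : Set W)) = U := by
  classical
  set Um : Submodule K W → Submodule K W := fun U => (S.filter (· < U)).sup id with hUm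
  have hUmle : ∀ U, Um U ≤ U := fun U =>
    Finset.sup_le fun V hV => le_of_lt (Finset.mem_filter.1 hV).2
  choose C hCle hCinf hCsup using fun U => exists_compl_within (hUmle U)
  -- spanning
  have span_aux : ∀ n : ℕ, ∀ U ∈ S, (S.filter (· < U)).card ≤ n →
      U ≤ (S.filter (· ≤ U)).sup C := by
    intro n
    induction n with
    | zero =>
      intro U hU hcard
      have hemp : S.filter (· < U) = ∅ := Finset.card_eq_zero.mp (Nat.le_zero.mp hcard)
      have hUmbot : Um U = ⊥ := by rw [hUm]; simp [hemp]
      have : U = C U := by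
        conv_lhs => rw [← hCsup U]
        rw [hUmbot, bot_sup_eq]
      exact this.le.trans (Finset.le_sup (Finset.mem_filter.2 ⟨hU, le_refl U⟩))
    | succ n ih =>
      intro U hU hcard
      refine le_trans (le_of_eq (hCsup U).symm) (sup_le ?_ ?_)
      · apply Finset.sup_le
        intro V hV
        obtain ⟨hVS, hVU⟩ := Finset.mem_filter.1 hV
        have hsub : S.filter (· < V) ⊆ S.filter (· < U) := by
          intro x hx
          obtain ⟨hxS, hxV⟩ := Finset.mem_filter.1 hx
          exact Finset.mem_filter.2 ⟨hxS, lt_trans hxV hVU⟩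
        have hss : S.filter (· < V) ⊂ S.filter (· < U) :=
          ⟨hsub, fun hsub' => absurd (Finset.mem_filter.1 (hsub' hV)).2 (lt_irrefl V)⟩
        have hcard' : (S.filter (· < V)).card ≤ n :=
          Nat.lt_succ_iff.mp (lt_of_lt_of_le (Finset.card_lt_card hss) hcard)
        have hV2 := ih V hVS hcard'
        refine le_trans (le_trans ?_ hV2) (Finset.sup_mono ?_)
        · exact le_refl _
        · intro x hx
          obtain ⟨hxS, hxV⟩ := Finset.mem_filter.1 hx
          exact Finset.mem_filter.2 ⟨hxS, le_trans hxV (le_of_lt hVU)⟩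
      · exact Finset.le_sup (Finset.mem_filter.2 ⟨hU, le_refl U⟩)
  have hspan : ∀ U ∈ S, (S.filter (· ≤ U)).sup C = U := fun U hU =>
    le_antisymm (Finset.sup_le fun V hV => le_trans (hCle V) (Finset.mem_filter.1 hV).2)
      (span_aux _ U hU le_rfl)
  -- key sum lemma
  have key : ∀ n : ℕ, ∀ F : Finset {x // x ∈ S}, F.card ≤ n → ∀ g : {x // x ∈ S} → W,
      (∀ j, g j ∈ C j.1) → (∑ j ∈ F, g j) = 0 → ∀ j ∈ F, g j = 0 := by
    intro n
    induction n with
    | zero =>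
      intro F hF g hg hsum j hj
      rw [Finset.card_eq_zero.mp (Nat.le_zero.mp hF)] at hj
      exact absurd hj (Finset.notMem_empty j)
    | succ n ih =>
      intro F hF g hg hsum j hj
      have hFne : F.Nonempty := ⟨j, hj⟩
      obtain ⟨m, hm, hmax⟩ := F.exists_maximal hFne
      -- g m ∈ sup of others
      have h1 : g m + ∑ x ∈ F.erase m, g x = 0 := by
        rw [Finset.add_sum_erase F g hm]; exact hsum
      have h2 : g m ∈ (F.erase m).sup (fun j => (j.1 : Submodule K W)) := by
        have : ∑ x ∈ F.erase m, g x ∈ (F.erase m).sup (fun j => (j.1 : Submodule K W)) :=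
          Submodule.sum_mem _ fun x hx =>
            (Finset.le_sup (f := fun j : {x // x ∈ S} => (j.1 : Submodule K W)) hx)
              (hCle x.1 (hg x))
        have hgm : g m = -∑ x ∈ F.erase m, g x := eq_neg_of_add_eq_zero_left h1
        rw [hgm]; exact neg_mem this
      have hJS : (F.erase m).sup (fun j => (j.1 : Submodule K W)) ∈ S :=
        finsetSup_mem S hbot hsupc _ _ fun x _ => x.2
      have h3 : (m.1 : Submodule K W) ⊓ (F.erase m).sup (fun j => (j.1 : Submodule K W))
          = (F.erase m).sup (fun j => m.1 ⊓ j.1) :=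
        inf_finsetSup S hbot hsupc hd3 _ _ (fun x _ => x.2) m.2
      have h4 : (F.erase m).sup (fun j => (m.1 : Submodule K W) ⊓ j.1) ≤ Um m.1 := by
        apply Finset.sup_le
        intro x hx
        have hne : x ≠ m := Finset.ne_of_mem_erase hx
        have hxF : x ∈ F := Finset.mem_of_mem_erase hx
        have hlt : (m.1 : Submodule K W) ⊓ x.1 < m.1 := by
          refine lt_of_le_of_ne inf_le_left fun he => ?_
          have hle : m.1 ≤ x.1 := by
            rw [← he]; exact inf_le_right
          have : m < x := lt_of_le_of_ne (Subtype.coe_le_coe.mp hle)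
            (fun h => hne h.symm)
          exact (lt_irrefl m) (lt_of_lt_of_le this (hmax hxF this.le))
        exact Finset.le_sup (f := id) (Finset.mem_filter.2 ⟨hinfc _ m.2 _ x.2, hlt⟩)
      have hgm0 : g m = 0 := by
        have hmem : g m ∈ Um m.1 ⊓ C m.1 := by
          constructor
          · exact h4 (h3 ▸ ⟨hCle m.1 (hg m), h2⟩)
          · exact hg m
        rw [hCinf m.1] at hmem
        simpa using hmem
      have hsum' : ∑ x ∈ F.erase m, g x = 0 := by
        rw [hgm0, zero_add] at h1; exact h1
      have hcard' : (F.erase m).card ≤ n := by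
        have := Finset.card_erase_of_mem hm
        omega
      by_cases hjm : j = m
      · rw [hjm]; exact hgm0
      · exact ih (F.erase m) hcard' g hg hsum' j (Finset.mem_erase.2 ⟨hjm, hj⟩)
  -- independence
  set A : {x // x ∈ S} → Submodule K W := fun i => C i.1 with hA
  have hind : iSupIndep A := by
    rw [iSupIndep_def]
    intro i
    rw [Submodule.disjoint_def]
    intro x hxA hxS
    rw [iSup_subtype'] at hxS
    rw [Submodule.mem_iSup_iff_exists_finsupp] at hxS
    obtain ⟨f, hf, hsum⟩ := hxS
    set g : {x // x ∈ S} → W := fun j => if h : j = i then -x else f ⟨j, h⟩ with hg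
    have hgmem : ∀ j, g j ∈ C j.1 := by
      intro j
      by_cases h : j = i
      · rw [hg]; simp only [h, dif_pos]; exact neg_mem hxA
      · rw [hg]; simp only [dif_neg h]; exact hf ⟨j, h⟩
    set F : Finset {x // x ∈ S} := insert i (f.support.image (fun j => j.1)) with hF
    have hinotin : i ∉ f.support.image (fun j => j.1) := by
      simp only [Finset.mem_image]
      rintro ⟨j, hjsup, hji⟩
      exact j.2 hji
    have hsumF : ∑ j ∈ F, g j = 0 := by
      rw [hF, Finset.sum_insert hinotin]
      have h1 : ∑ j ∈ f.support.image (fun j => j.1), g j = ∑ j ∈ f.support, f j := by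
        rw [Finset.sum_image (fun a _ b _ h => Subtype.val_injective h)]
        apply Finset.sum_congr rfl
        intro j _
        rw [hg]
        simp only [dif_neg j.2]
      rw [h1]
      have h2 : ∑ j ∈ f.support, f j = x := hsum
      have h3 : g i = -x := by rw [hg]; simp
      rw [h2, h3, neg_add_cancel]
    have := key F.card F le_rfl g hgmem hsumF i (Finset.mem_insert_self _ _)
    have h4 : g i = -x := by rw [hg]; simp
    rw [h4] at this
    simpa using this.symm ▸ (neg_eq_zero.mp this)
  have htopsup : ⨆ i : {x // x ∈ S}, A i = ⊤ := by
    have h1 : ⨆ i : {x // x ∈ S}, A i = S.sup C := by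
      rw [Finset.sup_eq_iSup, iSup_subtype']
    rw [h1]
    have h2 : S.filter (· ≤ (⊤ : Submodule K W)) = S :=
      Finset.filter_true_of_mem fun _ _ => le_top
    have := hspan ⊤ htop
    rw [h2] at this
    exact this
  have hInternal : DirectSum.IsInternal A :=
    (DirectSum.isInternal_submodule_iff_iSupIndep_and_iSup_eq_top A).mpr ⟨hind, htopsup⟩
  set v : ∀ i : {x // x ∈ S}, Module.Basis (Module.Basis.ofVectorSpaceIndex K (A i)) K (A i) :=
    fun i => Module.Basis.ofVectorSpace K (A i) with hv
  set b := hInternal.collectedBasis v with hb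
  refine ⟨Set.range ⇑b, ?_, ?_, ?_⟩
  · exact (linearIndepOn_id_range_iff b.injective).mpr b.linearIndependent
  · exact b.span_eq
  · intro U hU
    apply le_antisymm
    · rw [Submodule.span_le]
      exact Set.inter_subset_right
    · conv_lhs => rw [← hspan U hU]
      apply Finset.sup_le
      intro V hV
      obtain ⟨hVS, hVU⟩ := Finset.mem_filter.1 hV
      set i : {x // x ∈ S} := ⟨V, hVS⟩ with hi
      have hAi : A i = Submodule.span K (⇑(A i).subtype '' Set.range ⇑(v i)) := by
        rw [Submodule.span_image, Module.Basis.span_eq, map_subtype_top]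
      have hCV : C V = A i := rfl
      rw [hCV, hAi]
      apply Submodule.span_mono
      rintro _ ⟨_, ⟨a, rfl⟩, rfl⟩
      constructor
      · exact ⟨⟨i, a⟩, by rw [hb, hInternal.collectedBasis_coe]; rfl⟩
      · have h5 : (↑(v i a) : W) ∈ A i := (v i a).2
        exact hVU (hCle V h5)

-- easy direction
theorem easy_dir {z : ℕ} (X : Fin z → Submodule K W)
    (h : ∃ B : Set W, LinearIndependent K (fun b : B => (b : W)) ∧ Submodule.span K B = ⊤ ∧
        ∀ i : Fin z,
          LinearIndependent K (fun b : (B ∩ (X i : Set W) : Set W) => (b : W)) ∧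
          Submodule.span K (B ∩ (X i : Set W)) = X i) :
    IsDistributiveCollection (Set.range X) := by
  obtain ⟨B, hBli, hBsp, hX⟩ := h
  set bb : Module.Basis ↥B K W := Module.Basis.mk hBli (by rw [Subtype.range_coe]; exact hBsp.ge) with hbb
  have hcoe : ⇑bb = fun x : ↥B => (x : W) := Module.Basis.coe_mk _ _
  have himg : ∀ s : Set W, s ⊆ B → ⇑bb '' (Subtype.val ⁻¹' s) = s := by
    intro s hs
    rw [hcoe]
    show Subtype.val '' (Subtype.val ⁻¹' s) = s
    rw [Subtype.image_preimage_coe]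
    exact Set.inter_eq_self_of_subset_right hs
  have span_inter : ∀ s t : Set W, s ⊆ B → t ⊆ B →
      span K s ⊓ span K t = span K (s ∩ t) := by
    intro s t hs ht
    apply le_antisymm
    · rintro x ⟨hxs, hxt⟩
      simp only [SetLike.mem_coe] at hxs hxt
      rw [← himg s hs, bb.mem_span_image] at hxs
      rw [← himg t ht, bb.mem_span_image] at hxt
      rw [← himg (s ∩ t) (subset_trans Set.inter_subset_left hs), bb.mem_span_image]
      rw [Set.preimage_inter]
      exact Set.subset_inter hxs hxt
    · exact le_inf (span_mono Set.inter_subset_left) (span_mono Set.inter_subset_right)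
  have hT : sublatticeGen (Set.range X) ⊆
      {U : Submodule K W | ∃ s : Set W, s ⊆ B ∧ span K s = U} := by
    intro U hU
    refine hU _ ⟨?_, ?_, ?_⟩
    · rintro _ ⟨i, rfl⟩
      exact ⟨B ∩ (X i : Set W), Set.inter_subset_left, (hX i).2⟩
    · rintro _ ⟨s, hs, rfl⟩ _ ⟨t, ht, rfl⟩
      exact ⟨s ∩ t, subset_trans Set.inter_subset_left hs, (span_inter s t hs ht).symm⟩
    · rintro _ ⟨s, hs, rfl⟩ _ ⟨t, ht, rfl⟩
      exact ⟨s ∪ t, Set.union_subset hs ht, Submodule.span_union s t⟩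
  intro a ha b hb c hc
  obtain ⟨sa, hsa, rfl⟩ := hT ha
  obtain ⟨sb, hsb, rfl⟩ := hT hb
  obtain ⟨sc, hsc, rfl⟩ := hT hc
  rw [← Submodule.span_union, span_inter _ _ hsa (Set.union_subset hsb hsc),
    Set.inter_union_distrib_left, Submodule.span_union,
    span_inter _ _ hsa hsb, span_inter _ _ hsa hsc]


theorem hard_dir {z : ℕ} (X : Fin z → Submodule K W)
    (hd : IsDistributiveCollection (Set.range X)) :
    ∃ B : Set W, LinearIndependent K (fun b : B => (b : W)) ∧ Submodule.span K B = ⊤ ∧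
        ∀ i : Fin z,
          LinearIndependent K (fun b : (B ∩ (X i : Set W) : Set W) => (b : W)) ∧
          Submodule.span K (B ∩ (X i : Set W)) = X i := by
  classical
  set m : Finset (Fin z) → Submodule K W := fun T => T.inf X with hm
  set J : Finset (Finset (Fin z)) → Submodule K W := fun 𝒯 => 𝒯.sup m with hJ
  set S : Finset (Submodule K W) := Finset.image J Finset.univ with hS
  set L : Set (Submodule K W) := sublatticeGen (Set.range X) with hL
  have hLX : ∀ i, X i ∈ L := fun i => Set.mem_sInter.2 fun T hT => hT.1 ⟨i, rfl⟩
  have hLinf : ∀ {a b : Submodule K W}, a ∈ L → b ∈ L → a ⊓ b ∈ L := fun ha hb =>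
    Set.mem_sInter.2 fun T hT => hT.2.1 _ (Set.mem_sInter.1 ha T hT) _ (Set.mem_sInter.1 hb T hT)
  have hLsup : ∀ {a b : Submodule K W}, a ∈ L → b ∈ L → a ⊔ b ∈ L := fun ha hb =>
    Set.mem_sInter.2 fun T hT => hT.2.2 _ (Set.mem_sInter.1 ha T hT) _ (Set.mem_sInter.1 hb T hT)
  have hminf : ∀ T : Finset (Fin z), T.Nonempty → m T ∈ L := by
    intro T hT
    refine Finset.Nonempty.cons_induction (motive := fun T _ => m T ∈ L) ?_ ?_ hT
    · intro a
      have : m {a} = X a := Finset.inf_singleton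
      rw [this]; exact hLX a
    · intro a s h hs ih
      have : m (Finset.cons a s h) = X a ⊓ m s := Finset.inf_cons h
      rw [this]; exact hLinf (hLX a) ih
  have htri : ∀ 𝒯 : Finset (Finset (Fin z)), J 𝒯 ∈ L ∨ J 𝒯 = ⊤ ∨ J 𝒯 = ⊥ := by
    intro 𝒯
    by_cases h0 : ∅ ∈ 𝒯
    · right; left
      refine eq_top_iff.2 ?_
      have : m ∅ ≤ J 𝒯 := Finset.le_sup h0
      rwa [show m ∅ = ⊤ from Finset.inf_empty] at this
    by_cases h1 : 𝒯 = ∅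
    · right; right; rw [h1]; exact Finset.sup_empty
    left
    have hne : 𝒯.Nonempty := Finset.nonempty_iff_ne_empty.2 h1
    refine Finset.Nonempty.cons_induction (motive := fun 𝒮 _ => ∅ ∉ 𝒮 → J 𝒮 ∈ L) ?_ ?_ hne h0
    · intro T hT
      have hTne : T.Nonempty := Finset.nonempty_iff_ne_empty.2
        fun h => hT (h ▸ Finset.mem_singleton_self T)
      have : J {T} = m T := Finset.sup_singleton
      rw [this]; exact hminf T hTne
    · intro T 𝒮 h hs ih hnot
      have : J (Finset.cons T 𝒮 h) = m T ⊔ J 𝒮 := Finset.sup_cons h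
      rw [this]
      have hTne : T.Nonempty := Finset.nonempty_iff_ne_empty.2
        fun he => hnot (he ▸ Finset.mem_cons_self T 𝒮)
      exact hLsup (hminf T hTne) (ih fun hmem => hnot (Finset.mem_cons_of_mem hmem))
  have core : ∀ a b c : Submodule K W, (a ∈ L ∨ a = ⊤ ∨ a = ⊥) → (b ∈ L ∨ b = ⊤ ∨ b = ⊥) →
      (c ∈ L ∨ c = ⊤ ∨ c = ⊥) → a ⊓ (b ⊔ c) = (a ⊓ b) ⊔ (a ⊓ c) := by
    rintro a b c (ha | rfl | rfl) (hb | rfl | rfl) (hc | rfl | rfl)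
    · exact hd a ha b hb c hc
    all_goals simp
  have hd3 : ∀ a ∈ S, ∀ b ∈ S, ∀ c ∈ S, a ⊓ (b ⊔ c) = (a ⊓ b) ⊔ (a ⊓ c) := by
    intro a ha b hb c hc
    obtain ⟨𝒜, -, rfl⟩ := Finset.mem_image.1 ha
    obtain ⟨ℬ, -, rfl⟩ := Finset.mem_image.1 hb
    obtain ⟨𝒞, -, rfl⟩ := Finset.mem_image.1 hc
    exact core _ _ _ (htri 𝒜) (htri ℬ) (htri 𝒞)
  have hbot : (⊥ : Submodule K W) ∈ S :=
    Finset.mem_image.2 ⟨∅, Finset.mem_univ _, Finset.sup_empty⟩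
  have htop : (⊤ : Submodule K W) ∈ S :=
    Finset.mem_image.2 ⟨{∅}, Finset.mem_univ _, by
      rw [hJ]; show Finset.sup {∅} m = ⊤
      rw [Finset.sup_singleton]; exact Finset.inf_empty⟩
  have hXS : ∀ i, X i ∈ S := fun i =>
    Finset.mem_image.2 ⟨{{i}}, Finset.mem_univ _, by
      rw [hJ]; show Finset.sup {{i}} m = X i
      rw [Finset.sup_singleton]; exact Finset.inf_singleton⟩
  have hmS : ∀ T : Finset (Fin z), m T ∈ S := fun T =>
    Finset.mem_image.2 ⟨{T}, Finset.mem_univ _, Finset.sup_singleton⟩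
  have hJS : ∀ 𝒯, J 𝒯 ∈ S := fun 𝒯 => Finset.mem_image.2 ⟨𝒯, Finset.mem_univ _, rfl⟩
  have hsupc : ∀ a ∈ S, ∀ b ∈ S, a ⊔ b ∈ S := by
    intro a ha b hb
    obtain ⟨𝒜, -, rfl⟩ := Finset.mem_image.1 ha
    obtain ⟨ℬ, -, rfl⟩ := Finset.mem_image.1 hb
    exact Finset.mem_image.2 ⟨𝒜 ∪ ℬ, Finset.mem_univ _, Finset.sup_union⟩
  have hinfc : ∀ a ∈ S, ∀ b ∈ S, a ⊓ b ∈ S := by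
    intro a ha b hb
    obtain ⟨𝒜, -, rfl⟩ := Finset.mem_image.1 ha
    obtain ⟨ℬ, -, rfl⟩ := Finset.mem_image.1 hb
    refine Finset.mem_image.2 ⟨Finset.image (fun p : Finset (Fin z) × Finset (Fin z) =>
      p.1 ∪ p.2) (𝒜 ×ˢ ℬ), Finset.mem_univ _, ?_⟩
    have step1 : J 𝒜 ⊓ J ℬ = ℬ.sup (fun T' => J 𝒜 ⊓ m T') :=
      inf_finsetSup S hbot hsupc hd3 ℬ m (fun T' _ => hmS T') (hJS 𝒜)
    have step2 : ∀ T', J 𝒜 ⊓ m T' = 𝒜.sup (fun T => m T ⊓ m T') := by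
      intro T'
      have e1 : m T' ⊓ J 𝒜 = 𝒜.sup (fun T => m T' ⊓ m T) :=
        inf_finsetSup S hbot hsupc hd3 𝒜 m (fun T _ => hmS T) (hmS T')
      calc J 𝒜 ⊓ m T' = m T' ⊓ J 𝒜 := inf_comm _ _
        _ = 𝒜.sup (fun T => m T' ⊓ m T) := e1
        _ = 𝒜.sup (fun T => m T ⊓ m T') := Finset.sup_congr rfl fun T _ => inf_comm _ _
    show Finset.sup _ m = J 𝒜 ⊓ J ℬ
    calc (Finset.image (fun p : Finset (Fin z) × Finset (Fin z) => p.1 ∪ p.2) (𝒜 ×ˢ ℬ)).sup m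
        = (𝒜 ×ˢ ℬ).sup (m ∘ fun p : Finset (Fin z) × Finset (Fin z) => p.1 ∪ p.2) :=
          Finset.sup_image _ _ _
      _ = 𝒜.sup (fun T => ℬ.sup fun T' =>
            (m ∘ fun p : Finset (Fin z) × Finset (Fin z) => p.1 ∪ p.2) (T, T')) :=
          Finset.sup_product_left _ _ _
      _ = 𝒜.sup (fun T => ℬ.sup fun T' => m T ⊓ m T') :=
          Finset.sup_congr rfl fun T _ => Finset.sup_congr rfl fun T' _ => Finset.inf_union
      _ = ℬ.sup (fun T' => 𝒜.sup fun T => m T ⊓ m T') := Finset.sup_comm _ _ _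
      _ = ℬ.sup (fun T' => J 𝒜 ⊓ m T') := Finset.sup_congr rfl fun T' _ => (step2 T').symm
      _ = J 𝒜 ⊓ J ℬ := step1.symm
  obtain ⟨B, h1, h2, h3⟩ := exists_common_basis S hbot htop hinfc hsupc hd3
  exact ⟨B, h1, h2, fun i =>
    ⟨LinearIndepOn.mono (v := id) h1 Set.inter_subset_left, h3 (X i) (hXS i)⟩⟩

end DistributiveCollectionProof

/-- A finite collection `X₁,…,X_z` of subspaces of a `K`-vector space `W`
is distributive iff there is a basis `B` of `W` such that `B ∩ Xᵢ` is a basis of `Xᵢ`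
for every `i`. -/
theorem distributive_iff_basis_intersecting
    {K W : Type*} [Field K] [AddCommGroup W] [Module K W]
    {z : ℕ} (X : Fin z → Submodule K W) :
    IsDistributiveCollection (Set.range X) ↔
      ∃ B : Set W, LinearIndependent K (fun b : B => (b : W)) ∧ Submodule.span K B = ⊤ ∧
        ∀ i : Fin z,
          LinearIndependent K (fun b : (B ∩ (X i : Set W) : Set W) => (b : W)) ∧
          Submodule.span K (B ∩ (X i : Set W)) = X i := by
  constructor
  · exact DistributiveCollectionProof.hard_dir X
  · exact DistributiveCollectionProof.easy_dir X
end
end
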